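/- arXiv:2509.20221 — 6 statements merged into one kernel-verified Lean document; each statement's English description precedes it below -/
import Mathlib

section
/- Let P̃₁, P̃₂ be random probability measures on X and let Z be a random variable defined on the same probability space. Then the kernel covariance satisfies the law of total covariance: Cov_k(P̃₁,P̃₂) = E_Z[Cov_k(P̃₁,P̃₂ | Z)] + Cov_k(E[P̃₁ | Z], E[P̃₂ | Z]), where Cov_k(·,· | Z) denotes the kernel covariance computed under the conditional law given Z, and E[P̃ᵢ | Z] denotes the conditional mean measure. -/
open MeasureTheory ProbabilityTheory Filter
open scoped RealInnerProductSpace ENNReal NNReal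

noncomputable section

/-- A positive-definite function `k`. -/
def IsPosDef {X : Type*} (k : X → X → ℝ) : Prop :=
  ∀ (n : ℕ) (x : Fin n → X) (c : Fin n → ℝ),
    0 ≤ ∑ i : Fin n, ∑ j : Fin n, c i * c j * k (x i) (x j)

/-- A bounded, measurable, symmetric, positive-definite kernel. -/
structure IsKernel {X : Type*} [MeasurableSpace X] (k : X → X → ℝ) : Prop where
  measurable : Measurable (Function.uncurry k)
  bounded : ∃ C : ℝ, ∀ x y, |k x y| ≤ C
  symm : ∀ x y, k x y = k y x
  posDef : IsPosDef k

/-- A realization of the reproducing kernel Hilbert space of `k`: a Hilbert space together with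
a feature map reproducing `k` whose feature vectors span a dense subspace. -/
structure FeatureMap {X : Type*} [MeasurableSpace X] (k : X → X → ℝ)
    (H : Type*) [NormedAddCommGroup H] [InnerProductSpace ℝ H] : Type _ where
  toFun : X → H
  stronglyMeasurable : StronglyMeasurable toFun
  repro : ∀ x y, ⟪toFun x, toFun y⟫ = k x y
  dense_span : Dense (Submodule.span ℝ (Set.range toFun) : Set H)

/-- Kernel mean embedding of a measure, as a Bochner integral of the feature map. -/
def meanEmb {X : Type*} [MeasurableSpace X] {k : X → X → ℝ} {H : Type*}
    [NormedAddCommGroup H] [InnerProductSpace ℝ H] [CompleteSpace H]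
    (F : FeatureMap k H) (μ : Measure X) : H :=
  ∫ x, F.toFun x ∂μ

/-- Kernel covariance of two random probability measures,
`Cov_k(P₁,P₂) = E[⟪μ_k(P₁) - E[μ_k(P₁)], μ_k(P₂) - E[μ_k(P₂)]⟫]`. -/
def kerCov {X : Type*} [MeasurableSpace X] {k : X → X → ℝ} {H : Type*}
    [NormedAddCommGroup H] [InnerProductSpace ℝ H] [CompleteSpace H]
    {Ω : Type*} [MeasurableSpace Ω]
    (F : FeatureMap k H) (Pr : Measure Ω) (P₁ P₂ : Ω → Measure X) : ℝ :=
  ∫ ω, ⟪meanEmb F (P₁ ω) - ∫ ω', meanEmb F (P₁ ω') ∂Pr,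
        meanEmb F (P₂ ω) - ∫ ω', meanEmb F (P₂ ω') ∂Pr⟫ ∂Pr

/-- Kernel variance of a random probability measure. -/
def kerVar {X : Type*} [MeasurableSpace X] {k : X → X → ℝ} {H : Type*}
    [NormedAddCommGroup H] [InnerProductSpace ℝ H] [CompleteSpace H]
    {Ω : Type*} [MeasurableSpace Ω]
    (F : FeatureMap k H) (Pr : Measure Ω) (P : Ω → Measure X) : ℝ :=
  kerCov F Pr P P

/-- Kernel correlation of two random probability measures. -/
def kerCorr {X : Type*} [MeasurableSpace X] {k : X → X → ℝ} {H : Type*}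
    [NormedAddCommGroup H] [InnerProductSpace ℝ H] [CompleteSpace H]
    {Ω : Type*} [MeasurableSpace Ω]
    (F : FeatureMap k H) (Pr : Measure Ω) (P₁ P₂ : Ω → Measure X) : ℝ :=
  kerCov F Pr P₁ P₂ / (Real.sqrt (kerVar F Pr P₁) * Real.sqrt (kerVar F Pr P₂))

/-- Covariance of two real random variables. -/
def rCov {Ω : Type*} [MeasurableSpace Ω] (Pr : Measure Ω) (U V : Ω → ℝ) : ℝ :=
  ∫ ω, (U ω - ∫ ω', U ω' ∂Pr) * (V ω - ∫ ω', V ω' ∂Pr) ∂Pr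

/-- Variance of a real random variable. -/
def rVar {Ω : Type*} [MeasurableSpace Ω] (Pr : Measure Ω) (U : Ω → ℝ) : ℝ :=
  rCov Pr U U

/-- Pearson correlation of two real random variables. -/
def rCorr {Ω : Type*} [MeasurableSpace Ω] (Pr : Measure Ω) (U V : Ω → ℝ) : ℝ :=
  rCov Pr U V / (Real.sqrt (rVar Pr U) * Real.sqrt (rVar Pr V))

end

noncomputable section

noncomputable section Aux

variable {Ω : Type*} [MeasurableSpace Ω] {E : Type*} [NormedAddCommGroup E] [NormedSpace ℝ E]

lemma my_integrable_of_bound (ν : Measure Ω) [IsFiniteMeasure ν] {f : Ω → E}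
    (hf : AEStronglyMeasurable f ν) {C : ℝ} (h : ∀ ω, ‖f ω‖ ≤ C) : Integrable f ν :=
  ⟨hf, HasFiniteIntegral.of_bounded (ae_of_all _ h)⟩

lemma my_integral_bind {S : Type*} [MeasurableSpace S]
    (ν : Measure S) [IsFiniteMeasure ν] (κ : S → Measure Ω) (hκm : Measurable κ)
    (hκp : ∀ s, IsProbabilityMeasure (κ s)) {f : Ω → E} (hf : StronglyMeasurable f)
    {C : ℝ} (hC : ∀ ω, ‖f ω‖ ≤ C) :
    ∫ ω, f ω ∂(ν.bind κ) = ∫ s, ∫ ω, f ω ∂(κ s) ∂ν := by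
  let K : Kernel S Ω := ⟨κ, hκm⟩
  haveI : IsMarkovKernel K := ⟨hκp⟩
  have hbind : ν.bind κ = (ν ⊗ₘ K).map Prod.snd := by
    ext t ht
    rw [Measure.bind_apply ht hκm.aemeasurable, Measure.map_apply measurable_snd ht,
      Measure.compProd_apply (measurable_snd ht)]
    rfl
  have hint : Integrable (fun p : S × Ω => f p.2) (ν ⊗ₘ K) :=
    my_integrable_of_bound _ (hf.comp_measurable measurable_snd).aestronglyMeasurable
      (fun p => hC p.2)
  rw [hbind, integral_map measurable_snd.aemeasurable hf.aestronglyMeasurable,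
    Measure.integral_compProd hint]
  rfl

lemma my_expand_inner {H : Type*} [NormedAddCommGroup H] [InnerProductSpace ℝ H]
    [CompleteSpace H] (Q : Measure Ω) [IsProbabilityMeasure Q] {f g : Ω → H}
    (hf : Integrable f Q) (hg : Integrable g Q)
    (hfg : Integrable (fun ω => ⟪f ω, g ω⟫) Q) (a b : H) :
    ∫ ω, ⟪f ω - a, g ω - b⟫ ∂Q
      = ∫ ω, ⟪f ω, g ω⟫ ∂Q - ⟪∫ ω, f ω ∂Q, b⟫ - ⟪a, ∫ ω, g ω ∂Q⟫ + ⟪a, b⟫ := by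
  have h1 : ∀ ω, ⟪f ω - a, g ω - b⟫
      = ⟪f ω, g ω⟫ - ⟪f ω, b⟫ - ⟪a, g ω⟫ + ⟪a, b⟫ := by
    intro ω
    simp only [inner_sub_left, inner_sub_right]
    ring
  simp_rw [h1]
  have h2 : Integrable (fun ω => ⟪f ω, g ω⟫ - ⟪f ω, b⟫) Q := hfg.sub (hf.inner_const b)
  have h3 : Integrable (fun ω => ⟪f ω, g ω⟫ - ⟪f ω, b⟫ - ⟪a, g ω⟫) Q := h2.sub (hg.const_inner a)
  rw [integral_add h3 (integrable_const _),
    integral_sub h2 (hg.const_inner a),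
    integral_sub hfg (hf.inner_const b), integral_inner hg, integral_const]
  have h4 : ∫ ω, ⟪f ω, b⟫ ∂Q = ⟪∫ ω, f ω ∂Q, b⟫ := by
    rw [show (fun ω => ⟪f ω, b⟫) = fun ω => ⟪b, f ω⟫ from funext fun ω => real_inner_comm _ _,
      integral_inner hf]
    exact real_inner_comm _ _
  rw [h4]
  simp [measure_univ]

end Aux

noncomputable section MainAux

variable {X : Type*} [MeasurableSpace X]
    {k : X → X → ℝ}
    {H : Type*} [NormedAddCommGroup H] [InnerProductSpace ℝ H] [CompleteSpace H]
    {Ω : Type*} [MeasurableSpace Ω]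

lemma my_meanEmb_sm (F : FeatureMap k H) {P : Ω → Measure X} (hPm : Measurable P)
    (hP : ∀ ω, IsProbabilityMeasure (P ω)) :
    StronglyMeasurable (fun ω => meanEmb F (P ω)) := by
  let K : Kernel Ω X := ⟨P, hPm⟩
  haveI : IsMarkovKernel K := ⟨hP⟩
  exact (F.stronglyMeasurable.comp_measurable
    (measurable_snd : Measurable fun p : Ω × X => p.2)).integral_kernel_prod_right'
    (κ := K)

lemma my_meanEmb_bound (F : FeatureMap k H) {B : ℝ} (hFB : ∀ x, ‖F.toFun x‖ ≤ B)
    (μ : Measure X) [IsProbabilityMeasure μ] : ‖meanEmb F μ‖ ≤ B := by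
  have := norm_integral_le_of_norm_le_const (μ := μ) (f := F.toFun) (C := B)
    (ae_of_all _ hFB)
  simpa [meanEmb] using this

end MainAux

set_option maxHeartbeats 1000000 in
theorem stmt_1
    {X : Type*} [TopologicalSpace X] [PolishSpace X] [LocallyCompactSpace X]
    [MeasurableSpace X] [BorelSpace X]
    {k : X → X → ℝ} (hk : IsKernel k)
    {H : Type*} [NormedAddCommGroup H] [InnerProductSpace ℝ H] [CompleteSpace H]
    (F : FeatureMap k H)
    {Ω : Type*} [MeasurableSpace Ω] (Pr : Measure Ω) [IsProbabilityMeasure Pr]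
    (P₁ P₂ : Ω → Measure X)
    (hP₁ : ∀ ω, IsProbabilityMeasure (P₁ ω)) (hP₂ : ∀ ω, IsProbabilityMeasure (P₂ ω))
    (hP₁m : Measurable P₁) (hP₂m : Measurable P₂)
    -- a random variable `Z` on the same probability space
    {S : Type*} [MeasurableSpace S] (Z : Ω → S) (hZ : Measurable Z)
    -- a regular conditional distribution of `Pr` given `Z`
    (κ : S → Measure Ω) (hκm : Measurable κ)
    (hκp : ∀ s, IsProbabilityMeasure (κ s))
    (hκ : ∀ ⦃B : Set Ω⦄, MeasurableSet B → ∀ ⦃C : Set S⦄, MeasurableSet C →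
      Pr (B ∩ Z ⁻¹' C) = ∫⁻ s in C, κ s B ∂(Pr.map Z)) :
    kerCov F Pr P₁ P₂ =
      (∫ s, kerCov F (κ s) P₁ P₂ ∂(Pr.map Z))
        + kerCov F (Pr.map Z) (fun s => (κ s).bind P₁) (fun s => (κ s).bind P₂) := by

  classical
  obtain ⟨C, hC⟩ := hk.bounded
  set B : ℝ := Real.sqrt C with hBdef
  have hB0 : 0 ≤ B := Real.sqrt_nonneg C
  have hFB : ∀ x, ‖F.toFun x‖ ≤ B := by
    intro x
    have hC0 : (0:ℝ) ≤ C := (abs_nonneg _).trans (hC x x)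
    rw [hBdef, Real.le_sqrt (norm_nonneg _) hC0]
    calc ‖F.toFun x‖ ^ 2 = ⟪F.toFun x, F.toFun x⟫ := (real_inner_self_eq_norm_sq _).symm
      _ = k x x := F.repro x x
      _ ≤ |k x x| := le_abs_self _
      _ ≤ C := hC x x
  set ν : Measure S := Pr.map Z with hνdef
  haveI : IsProbabilityMeasure ν := Measure.isProbabilityMeasure_map hZ.aemeasurable
  set f : Ω → H := fun ω => meanEmb F (P₁ ω) with hfdef
  set g : Ω → H := fun ω => meanEmb F (P₂ ω) with hgdef
  have hfsm : StronglyMeasurable f := my_meanEmb_sm F hP₁m hP₁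
  have hgsm : StronglyMeasurable g := my_meanEmb_sm F hP₂m hP₂
  have hfB : ∀ ω, ‖f ω‖ ≤ B := fun ω => by
    haveI := hP₁ ω; exact my_meanEmb_bound F hFB (P₁ ω)
  have hgB : ∀ ω, ‖g ω‖ ≤ B := fun ω => by
    haveI := hP₂ ω; exact my_meanEmb_bound F hFB (P₂ ω)
  -- disintegration of Pr
  have hPr : Pr = ν.bind κ := by
    ext t ht
    have h := hκ ht MeasurableSet.univ
    simpa [Measure.bind_apply ht hκm.aemeasurable] using h
  -- conditional means
  set fb : S → H := fun s => ∫ ω, f ω ∂κ s with hfbdef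
  set gb : S → H := fun s => ∫ ω, g ω ∂κ s with hgbdef
  have hfb_eq : ∀ s, meanEmb F ((κ s).bind P₁) = fb s := fun s => by
    haveI := hκp s
    exact my_integral_bind (κ s) P₁ hP₁m hP₁ F.stronglyMeasurable hFB
  have hgb_eq : ∀ s, meanEmb F ((κ s).bind P₂) = gb s := fun s => by
    haveI := hκp s
    exact my_integral_bind (κ s) P₂ hP₂m hP₂ F.stronglyMeasurable hFB
  let K : Kernel S Ω := ⟨κ, hκm⟩
  haveI : IsMarkovKernel K := ⟨hκp⟩
  have hfbsm : StronglyMeasurable fb :=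
    (hfsm.comp_measurable (measurable_snd : Measurable fun p : S × Ω => p.2))
      |>.integral_kernel_prod_right' (κ := K)
  have hgbsm : StronglyMeasurable gb :=
    (hgsm.comp_measurable (measurable_snd : Measurable fun p : S × Ω => p.2))
      |>.integral_kernel_prod_right' (κ := K)
  have hfbB : ∀ s, ‖fb s‖ ≤ B := fun s => by
    haveI := hκp s
    simpa using norm_integral_le_of_norm_le_const (μ := κ s) (f := f) (ae_of_all _ hfB)
  have hgbB : ∀ s, ‖gb s‖ ≤ B := fun s => by
    haveI := hκp s
    simpa using norm_integral_le_of_norm_le_const (μ := κ s) (f := g) (ae_of_all _ hgB)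
  set m₁ : H := ∫ ω', f ω' ∂Pr with hm₁def
  set m₂ : H := ∫ ω', g ω' ∂Pr with hm₂def
  have hm₁ : m₁ = ∫ s, fb s ∂ν := by
    rw [hm₁def, hPr]; exact my_integral_bind ν κ hκm hκp hfsm hfB
  have hm₂ : m₂ = ∫ s, gb s ∂ν := by
    rw [hm₂def, hPr]; exact my_integral_bind ν κ hκm hκp hgsm hgB
  have hm₁B : ‖m₁‖ ≤ B := by
    rw [hm₁def]
    simpa using norm_integral_le_of_norm_le_const (μ := Pr) (f := f) (ae_of_all _ hfB)
  have hm₂B : ‖m₂‖ ≤ B := by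
    rw [hm₂def]
    simpa using norm_integral_le_of_norm_le_const (μ := Pr) (f := g) (ae_of_all _ hgB)
  -- integrands over κ s
  have hinner_sm : StronglyMeasurable (fun ω => ⟪f ω, g ω⟫) := hfsm.inner hgsm
  have hinnerB : ∀ ω, ‖⟪f ω, g ω⟫‖ ≤ B * B := fun ω =>
    (norm_inner_le_norm _ _).trans (mul_le_mul (hfB ω) (hgB ω) (norm_nonneg _) hB0)
  -- key pointwise identity
  have key : ∀ s, ∫ ω, ⟪f ω - m₁, g ω - m₂⟫ ∂κ s
      = kerCov F (κ s) P₁ P₂ + ⟪fb s - m₁, gb s - m₂⟫ := by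
    intro s
    haveI := hκp s
    have hfi : Integrable f (κ s) := my_integrable_of_bound _ hfsm.aestronglyMeasurable hfB
    have hgi : Integrable g (κ s) := my_integrable_of_bound _ hgsm.aestronglyMeasurable hgB
    have hfgi : Integrable (fun ω => ⟪f ω, g ω⟫) (κ s) :=
      my_integrable_of_bound _ hinner_sm.aestronglyMeasurable hinnerB
    have e2 : kerCov F (κ s) P₁ P₂ = ∫ ω, ⟪f ω, g ω⟫ ∂κ s - ⟪fb s, gb s⟫ := by
      have : kerCov F (κ s) P₁ P₂ = ∫ ω, ⟪f ω - fb s, g ω - gb s⟫ ∂κ s := rfl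
      have hfs : ∫ ω, f ω ∂κ s = fb s := rfl
      have hgs : ∫ ω, g ω ∂κ s = gb s := rfl
      rw [this, my_expand_inner (κ s) hfi hgi hfgi (fb s) (gb s), hfs, hgs]
      ring
    have hfs : ∫ ω, f ω ∂κ s = fb s := rfl
    have hgs : ∫ ω, g ω ∂κ s = gb s := rfl
    rw [my_expand_inner (κ s) hfi hgi hfgi m₁ m₂, e2, hfs, hgs]
    simp only [inner_sub_left, inner_sub_right]
    ring
  -- the big integrand
  have hφsm : StronglyMeasurable (fun ω => ⟪f ω - m₁, g ω - m₂⟫) :=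
    (hfsm.sub stronglyMeasurable_const).inner (hgsm.sub stronglyMeasurable_const)
  have hφB : ∀ ω, ‖⟪f ω - m₁, g ω - m₂⟫‖ ≤ (B + B) * (B + B) := fun ω =>
    (norm_inner_le_norm _ _).trans
      (mul_le_mul ((norm_sub_le _ _).trans (add_le_add (hfB ω) hm₁B))
        ((norm_sub_le _ _).trans (add_le_add (hgB ω) hm₂B)) (norm_nonneg _)
        (by linarith))
  -- LHS
  have hLHS : kerCov F Pr P₁ P₂ = ∫ s, ∫ ω, ⟪f ω - m₁, g ω - m₂⟫ ∂κ s ∂ν := by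
    have h0 : kerCov F Pr P₁ P₂ = ∫ ω, ⟪f ω - m₁, g ω - m₂⟫ ∂Pr := rfl
    rw [h0]
    conv_lhs => rw [hPr]
    exact my_integral_bind ν κ hκm hκp hφsm hφB
  -- integrability over ν of the two summands
  have hcov_eq : ∀ s, kerCov F (κ s) P₁ P₂ = (∫ ω, ⟪f ω, g ω⟫ ∂κ s) - ⟪fb s, gb s⟫ := by
    intro s
    haveI := hκp s
    have hfi : Integrable f (κ s) := my_integrable_of_bound _ hfsm.aestronglyMeasurable hfB
    have hgi : Integrable g (κ s) := my_integrable_of_bound _ hgsm.aestronglyMeasurable hgB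
    have hfgi : Integrable (fun ω => ⟪f ω, g ω⟫) (κ s) :=
      my_integrable_of_bound _ hinner_sm.aestronglyMeasurable hinnerB
    have : kerCov F (κ s) P₁ P₂ = ∫ ω, ⟪f ω - fb s, g ω - gb s⟫ ∂κ s := rfl
    have hfs : ∫ ω, f ω ∂κ s = fb s := rfl
    have hgs : ∫ ω, g ω ∂κ s = gb s := rfl
    rw [this, my_expand_inner (κ s) hfi hgi hfgi (fb s) (gb s), hfs, hgs]
    ring
  have hA_sm : StronglyMeasurable (fun s => kerCov F (κ s) P₁ P₂) := by
    have h1 : StronglyMeasurable (fun s => ∫ ω, ⟪f ω, g ω⟫ ∂κ s) :=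
      (hinner_sm.comp_measurable
        (measurable_snd : Measurable fun p : S × Ω => p.2)).integral_kernel_prod_right'
        (κ := K)
    have h2 : StronglyMeasurable (fun s => ⟪fb s, gb s⟫) := hfbsm.inner hgbsm
    have heq : (fun s => kerCov F (κ s) P₁ P₂)
        = fun s => (∫ ω, ⟪f ω, g ω⟫ ∂κ s) - ⟪fb s, gb s⟫ := funext hcov_eq
    rw [heq]
    exact h1.sub h2
  have hA_int : Integrable (fun s => kerCov F (κ s) P₁ P₂) ν := by
    refine my_integrable_of_bound _ hA_sm.aestronglyMeasurable (C := B * B + B * B) ?_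
    intro s
    rw [hcov_eq s]
    refine (norm_sub_le _ _).trans (add_le_add ?_ ?_)
    · haveI := hκp s
      simpa using norm_integral_le_of_norm_le_const (μ := κ s)
        (f := fun ω => ⟪f ω, g ω⟫) (ae_of_all _ hinnerB)
    · exact (norm_inner_le_norm _ _).trans
        (mul_le_mul (hfbB s) (hgbB s) (norm_nonneg _) hB0)
  have hB_sm : StronglyMeasurable (fun s => ⟪fb s - m₁, gb s - m₂⟫) :=
    (hfbsm.sub stronglyMeasurable_const).inner (hgbsm.sub stronglyMeasurable_const)
  have hB_int : Integrable (fun s => ⟪fb s - m₁, gb s - m₂⟫) ν := by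
    refine my_integrable_of_bound _ hB_sm.aestronglyMeasurable (C := (B + B) * (B + B)) ?_
    intro s
    exact (norm_inner_le_norm _ _).trans
      (mul_le_mul ((norm_sub_le _ _).trans (add_le_add (hfbB s) hm₁B))
        ((norm_sub_le _ _).trans (add_le_add (hgbB s) hm₂B)) (norm_nonneg _) (by linarith))
  -- RHS second term
  have hRHS2 : kerCov F ν (fun s => (κ s).bind P₁) (fun s => (κ s).bind P₂)
      = ∫ s, ⟪fb s - m₁, gb s - m₂⟫ ∂ν := by
    have h0 : kerCov F ν (fun s => (κ s).bind P₁) (fun s => (κ s).bind P₂)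
        = ∫ s, ⟪meanEmb F ((κ s).bind P₁) - ∫ s', meanEmb F ((κ s').bind P₁) ∂ν,
                meanEmb F ((κ s).bind P₂) - ∫ s', meanEmb F ((κ s').bind P₂) ∂ν⟫ ∂ν := rfl
    rw [h0]
    simp only [hfb_eq, hgb_eq]
    rw [← hm₁, ← hm₂]
  rw [hLHS, integral_congr_ae (ae_of_all _ key), integral_add hA_int hB_int, hRHS2]


end
end

section
/- For any random probability measure P̃ on X, the kernel variance satisfies Var_k(P̃) ≥ 0. If moreover the kernel k is characteristic, then Var_k(P̃) = 0 if and only if P̃ is deterministic, i.e., P̃ = P almost surely for some fixed probability measure P on X. -/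
open MeasureTheory ProbabilityTheory Filter
open scoped RealInnerProductSpace ENNReal NNReal

noncomputable section

/-- A kernel is characteristic if the kernel mean embedding
`μ ↦ (y ↦ ∫ k(x,y) dμ(x))` is injective on probability measures. -/
def IsCharacteristic {Z : Type*} [MeasurableSpace Z] (k : Z → Z → ℝ) : Prop :=
  ∀ μ₁ μ₂ : Measure Z, IsProbabilityMeasure μ₁ → IsProbabilityMeasure μ₂ →
    (∀ y, ∫ x, k x y ∂μ₁ = ∫ x, k x y ∂μ₂) → μ₁ = μ₂

theorem stmt_2
    {X : Type*} [TopologicalSpace X] [PolishSpace X] [LocallyCompactSpace X]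
    [MeasurableSpace X] [BorelSpace X]
    {k : X → X → ℝ} (hk : IsKernel k)
    {H : Type*} [NormedAddCommGroup H] [InnerProductSpace ℝ H] [CompleteSpace H]
    (F : FeatureMap k H)
    {Ω : Type*} [MeasurableSpace Ω] (Pr : Measure Ω) [IsProbabilityMeasure Pr]
    (P : Ω → Measure X)
    (hP : ∀ ω, IsProbabilityMeasure (P ω)) (hPm : Measurable P) :
    0 ≤ kerVar F Pr P ∧
      (IsCharacteristic k →
        (kerVar F Pr P = 0 ↔
          ∃ Q : Measure X, IsProbabilityMeasure Q ∧ ∀ᵐ ω ∂Pr, P ω = Q)) := by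
  classical
  obtain ⟨C, hC⟩ := hk.bounded
  -- bound on the feature map
  have hFb : ∀ x, ‖F.toFun x‖ ≤ Real.sqrt C := by
    intro x
    have h1 : ‖F.toFun x‖ ^ 2 = k x x := by
      rw [← F.repro x x, real_inner_self_eq_norm_sq]
    have h2 : ‖F.toFun x‖ ^ 2 ≤ C := by rw [h1]; exact (abs_le.1 (hC x x)).2
    calc ‖F.toFun x‖ = Real.sqrt (‖F.toFun x‖ ^ 2) := by
          rw [Real.sqrt_sq (norm_nonneg _)]
      _ ≤ Real.sqrt C := Real.sqrt_le_sqrt h2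
  -- integrability of the feature map against any finite measure
  have hFint : ∀ (μ : Measure X), IsFiniteMeasure μ → Integrable F.toFun μ := by
    intro μ hμ
    exact ⟨F.stronglyMeasurable.aestronglyMeasurable,
      HasFiniteIntegral.of_bounded (C := Real.sqrt C) (Filter.Eventually.of_forall hFb)⟩
  set g : Ω → H := fun ω => meanEmb F (P ω) with hg_def
  -- bound on g
  have hgb : ∀ ω, ‖g ω‖ ≤ Real.sqrt C := by
    intro ω
    haveI := hP ω
    show ‖∫ x, F.toFun x ∂(P ω)‖ ≤ Real.sqrt C
    have h := norm_integral_le_of_norm_le_const (μ := P ω) (Filter.Eventually.of_forall hFb)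
    simpa using h
  -- strong measurability of g via a Markov kernel
  let κ : ProbabilityTheory.Kernel Ω X := ⟨P, hPm⟩
  haveI : ProbabilityTheory.IsMarkovKernel κ := ⟨hP⟩
  have hgm : StronglyMeasurable g := by
    have hu : StronglyMeasurable (Function.uncurry fun (_ : Ω) (x : X) => F.toFun x) :=
      F.stronglyMeasurable.comp_measurable measurable_snd
    exact hu.integral_kernel_prod_right (κ := κ)
  set m : H := ∫ ω, g ω ∂Pr with hm_def
  have hgint : Integrable g Pr :=
    ⟨hgm.aestronglyMeasurable,
      HasFiniteIntegral.of_bounded (C := Real.sqrt C) (Filter.Eventually.of_forall hgb)⟩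
  -- kerVar as an integral of squared norms
  have hvar : kerVar F Pr P = ∫ ω, ‖g ω - m‖ ^ 2 ∂Pr := by
    unfold kerVar kerCov
    refine integral_congr_ae (Filter.Eventually.of_forall fun ω => ?_)
    show ⟪g ω - m, g ω - m⟫ = ‖g ω - m‖ ^ 2
    exact real_inner_self_eq_norm_sq _
  have hnonneg : 0 ≤ kerVar F Pr P := by
    rw [hvar]
    exact integral_nonneg fun ω => sq_nonneg _
  refine ⟨hnonneg, fun hchar => ?_⟩
  -- relate integrals of k to the mean embedding
  have hkey : ∀ (μ : Measure X), IsFiniteMeasure μ → ∀ y,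
      ∫ x, k x y ∂μ = ⟪meanEmb F μ, F.toFun y⟫ := by
    intro μ hμ y
    have : ∫ x, k x y ∂μ = ∫ x, ⟪F.toFun y, F.toFun x⟫ ∂μ := by
      refine integral_congr_ae (Filter.Eventually.of_forall fun x => ?_)
      show k x y = ⟪F.toFun y, F.toFun x⟫
      rw [real_inner_comm, F.repro]
    rw [this, integral_inner (hFint μ hμ) (F.toFun y), real_inner_comm]
    rfl
  constructor
  · intro h0
    -- the integrand is integrable
    have hint2 : Integrable (fun ω => ‖g ω - m‖ ^ 2) Pr := by
      refine ⟨((continuous_pow 2).comp_stronglyMeasurable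
        (hgm.sub stronglyMeasurable_const).norm).aestronglyMeasurable,
        HasFiniteIntegral.of_bounded (C := (Real.sqrt C + ‖m‖) ^ 2)
          (Filter.Eventually.of_forall fun ω => ?_)⟩
      have h1 : ‖g ω - m‖ ≤ Real.sqrt C + ‖m‖ :=
        (norm_sub_le _ _).trans (add_le_add_left (hgb ω) _)
      have h2 : (0:ℝ) ≤ ‖g ω - m‖ := norm_nonneg _
      calc ‖‖g ω - m‖ ^ 2‖ = ‖g ω - m‖ ^ 2 := by
            rw [Real.norm_of_nonneg (sq_nonneg _)]
        _ ≤ (Real.sqrt C + ‖m‖) ^ 2 := by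
            exact pow_le_pow_left₀ h2 h1 2
    rw [hvar] at h0
    have hae : ∀ᵐ ω ∂Pr, ‖g ω - m‖ ^ 2 = 0 := by
      have := (integral_eq_zero_iff_of_nonneg (fun ω => sq_nonneg _) hint2).1 h0
      filter_upwards [this] with ω hω using hω
    have haem : ∀ᵐ ω ∂Pr, g ω = m := by
      filter_upwards [hae] with ω hω
      have : ‖g ω - m‖ = 0 := by
        have := sq_eq_zero_iff.1 hω
        exact this
      rw [sub_eq_zero.1 (norm_eq_zero.1 this)]
    -- pick a witness ω₀ in the a.e. set
    haveI : (ae Pr).NeBot := ae_neBot.2 (IsProbabilityMeasure.ne_zero Pr)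
    obtain ⟨ω₀, hω₀⟩ := haem.exists
    refine ⟨P ω₀, hP ω₀, ?_⟩
    filter_upwards [haem] with ω hω
    refine hchar (P ω) (P ω₀) (hP ω) (hP ω₀) fun y => ?_
    haveI := hP ω; haveI := hP ω₀
    have e1 := hkey (P ω) inferInstance y
    have e2 := hkey (P ω₀) inferInstance y
    rw [e1, e2]
    show ⟪g ω, F.toFun y⟫ = ⟪g ω₀, F.toFun y⟫
    rw [hω, hω₀]
  · rintro ⟨Q, hQ, hae⟩
    have hgq : ∀ᵐ ω ∂Pr, g ω = meanEmb F Q := by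
      filter_upwards [hae] with ω hω
      simp only [hg_def, hω]
    have hm : m = meanEmb F Q := by
      rw [hm_def, integral_congr_ae hgq, integral_const]
      simp
    rw [hvar]
    have : ∀ᵐ ω ∂Pr, ‖g ω - m‖ ^ 2 = 0 := by
      filter_upwards [hgq] with ω hω
      rw [hω, hm, sub_self, norm_zero]
      ring
    rw [integral_congr_ae this, integral_zero]


end
end

section
/- Let k be a c₀-universal kernel on X and let P̃₁, P̃₂ be random probability measures with Var_k(P̃ᵢ) > 0 for i = 1,2. Then Corr_k(P̃₁,P̃₂) = ±1 if and only if there exists α ∈ ℝ \ {0} such that P̃₁ − E[P̃₁] = α (P̃₂ − E[P̃₂]) almost surely (as an equality of signed measures). Moreover, the sign of α coincides with the sign of Corr_k(P̃₁,P̃₂). -/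
open MeasureTheory ProbabilityTheory Filter
open scoped RealInnerProductSpace ENNReal NNReal

noncomputable section

/-- A kernel vanishes at infinity (is `c₀`). -/
def IsC0Kernel {Z : Type*} [TopologicalSpace Z] (k : Z → Z → ℝ) : Prop :=
  ∀ ε : ℝ, 0 < ε → ∀ y : Z, IsCompact {x : Z | ε ≤ |k x y|}

/-- The kernel mean embedding of a bounded signed measure,
`μ_k(ξ)(y) = ∫ k(x,y) dξ(x)`, via the Jordan decomposition. -/
def signedMeanEmb {Z : Type*} [MeasurableSpace Z] (k : Z → Z → ℝ)
    (ξ : SignedMeasure Z) : Z → ℝ := fun y =>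
  (∫ x, k x y ∂ξ.toJordanDecomposition.posPart)
    - ∫ x, k x y ∂ξ.toJordanDecomposition.negPart

/-- A kernel is `c₀`-universal if it is `c₀` and its kernel mean embedding is injective
on the space of bounded signed measures. -/
def IsC0Universal {Z : Type*} [TopologicalSpace Z] [MeasurableSpace Z]
    (k : Z → Z → ℝ) : Prop :=
  IsC0Kernel k ∧ Function.Injective (signedMeanEmb k)

section Aux


variable {X : Type*} [MeasurableSpace X]

lemma aux_integrable_bdd {E : Type*} [NormedAddCommGroup E] {μ : Measure X} [IsFiniteMeasure μ]
    {f : X → E} (hf : AEStronglyMeasurable f μ) {C : ℝ} (h : ∀ x, ‖f x‖ ≤ C) :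
    Integrable f μ :=
  (integrable_const C).mono' hf (Eventually.of_forall h)

lemma aux_k_meas {k : X → X → ℝ} (hkm : Measurable (Function.uncurry k)) (y : X) :
    Measurable fun x => k x y :=
  hkm.comp (measurable_id.prodMk measurable_const)

lemma aux_k_int {k : X → X → ℝ} (hkm : Measurable (Function.uncurry k))
    {C : ℝ} (hkb : ∀ x y, |k x y| ≤ C) (y : X) (μ : Measure X) [IsFiniteMeasure μ] :
    Integrable (fun x => k x y) μ :=
  aux_integrable_bdd (aux_k_meas hkm y).aestronglyMeasurable (fun x => hkb x y)

/-- Master lemma: injectivity of the signed mean embedding gives equality of finite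
measures with identical kernel integrals. -/
lemma aux_measure_eq {k : X → X → ℝ} (hkm : Measurable (Function.uncurry k))
    {C : ℝ} (hkb : ∀ x y, |k x y| ≤ C)
    (hinj : Function.Injective (signedMeanEmb k))
    (μ ν : Measure X) [IsFiniteMeasure μ] [IsFiniteMeasure ν]
    (h : ∀ y, ∫ x, k x y ∂μ = ∫ x, k x y ∂ν) : μ = ν := by
  set ξ : SignedMeasure X := μ.toSignedMeasure - ν.toSignedMeasure with hξdef
  set p := ξ.toJordanDecomposition.posPart with hp
  set n := ξ.toJordanDecomposition.negPart with hn
  have key : μ + n = ν + p := by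
    ext A hA
    have h1 := ξ.toSignedMeasure_toJordanDecomposition
    have h2 : (p A).toReal - (n A).toReal = ξ A := by
      conv_rhs => rw [← h1]
      rw [JordanDecomposition.toSignedMeasure, VectorMeasure.sub_apply,
        Measure.toSignedMeasure_apply_measurable hA,
        Measure.toSignedMeasure_apply_measurable hA]
      rfl
    have h3 : ξ A = (μ A).toReal - (ν A).toReal := by
      simp [hξdef, VectorMeasure.sub_apply, Measure.toSignedMeasure_apply_measurable hA, hA]
      rfl
    have h4 : (μ A).toReal + (n A).toReal = (ν A).toReal + (p A).toReal := by
      rw [h3] at h2; linarith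
    rw [← ENNReal.toReal_add (measure_ne_top _ _) (measure_ne_top _ _),
      ← ENNReal.toReal_add (measure_ne_top _ _) (measure_ne_top _ _)] at h4
    have := (ENNReal.toReal_eq_toReal_iff' (by finiteness) (by finiteness)).mp h4
    simpa [Measure.add_apply] using this
  have hint : ∀ y, ∫ x, k x y ∂p - ∫ x, k x y ∂n = 0 := by
    intro y
    have h5 : ∫ x, k x y ∂(μ + n) = ∫ x, k x y ∂(ν + p) := by rw [key]
    rw [integral_add_measure (aux_k_int hkm hkb y μ) (aux_k_int hkm hkb y n),
      integral_add_measure (aux_k_int hkm hkb y ν) (aux_k_int hkm hkb y p)] at h5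
    have := h y; linarith
  have hemb : signedMeanEmb k ξ = signedMeanEmb k 0 := by
    funext y
    have : signedMeanEmb k (0 : SignedMeasure X) y = 0 := by
      simp [signedMeanEmb, SignedMeasure.toJordanDecomposition_zero]
    rw [this]
    simpa [signedMeanEmb, ← hp, ← hn] using hint y
  have hξ0 : ξ = 0 := hinj hemb
  have : μ.toSignedMeasure = ν.toSignedMeasure := by
    rw [hξdef] at hξ0; exact sub_eq_zero.mp hξ0
  exact Measure.toSignedMeasure_eq_toSignedMeasure_iff.mp this

lemma aux_bind_prob {Ω : Type*} [MeasurableSpace Ω] (Pr : Measure Ω) [IsProbabilityMeasure Pr]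
    (P : Ω → Measure X) (hm : Measurable P) (hp : ∀ ω, IsProbabilityMeasure (P ω)) :
    IsProbabilityMeasure (Pr.bind P) := by
  constructor
  rw [Measure.bind_apply MeasurableSet.univ hm.aemeasurable]
  simp only [fun ω => (hp ω).measure_univ]
  simp

lemma aux_integral_bind {Ω : Type*} [MeasurableSpace Ω] (Pr : Measure Ω) [IsProbabilityMeasure Pr]
    (P : Ω → Measure X) (hm : Measurable P) (hp : ∀ ω, IsProbabilityMeasure (P ω))
    {g : X → ℝ} (hg : Measurable g) {C : ℝ} (hgb : ∀ x, |g x| ≤ C) :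
    ∫ x, g x ∂(Pr.bind P) = ∫ ω, ∫ x, g x ∂(P ω) ∂Pr := by
  haveI := aux_bind_prob Pr P hm hp
  set f : X → ℝ := fun x => g x + C with hf
  have hf0 : ∀ x, 0 ≤ f x := fun x => by have := abs_le.mp (hgb x); simp [hf]; linarith
  have hfb : ∀ x, f x ≤ C + C := fun x => by have := abs_le.mp (hgb x); simp [hf]; linarith
  have hfm : Measurable f := hg.add_const C
  have hgint : ∀ (μ : Measure X) [IsProbabilityMeasure μ], Integrable g μ := fun μ _ =>
    aux_integrable_bdd hg.aestronglyMeasurable (fun x => hgb x)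
  have hfg : ∀ (μ : Measure X) [IsProbabilityMeasure μ], ∫ x, f x ∂μ = (∫ x, g x ∂μ) + C := by
    intro μ _
    rw [hf]
    rw [integral_add (hgint μ) (integrable_const C)]
    simp
  have hlin : ∀ (μ : Measure X) [IsProbabilityMeasure μ],
      ∫ x, f x ∂μ = (∫⁻ x, ENNReal.ofReal (f x) ∂μ).toReal := by
    intro μ _
    rw [integral_eq_lintegral_of_nonneg_ae (Eventually.of_forall hf0) hfm.aestronglyMeasurable]
  set φ : Ω → ℝ≥0∞ := fun ω => ∫⁻ x, ENNReal.ofReal (f x) ∂(P ω) with hφ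
  have hφm : Measurable φ :=
    (Measure.measurable_lintegral (ENNReal.measurable_ofReal.comp hfm)).comp hm
  have hφb : ∀ ω, φ ω ≤ ENNReal.ofReal (C + C) := by
    intro ω
    haveI := hp ω
    calc φ ω ≤ ∫⁻ _, ENNReal.ofReal (C + C) ∂(P ω) :=
          lintegral_mono fun x => ENNReal.ofReal_le_ofReal (hfb x)
      _ = ENNReal.ofReal (C + C) := by simp
  have hbind : ∫⁻ x, ENNReal.ofReal (f x) ∂(Pr.bind P) = ∫⁻ ω, φ ω ∂Pr :=
    Measure.lintegral_bind hm.aemeasurable (ENNReal.measurable_ofReal.comp hfm).aemeasurable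
  have hout : ∫ ω, (φ ω).toReal ∂Pr = (∫⁻ ω, φ ω ∂Pr).toReal :=
    integral_toReal hφm.aemeasurable (Eventually.of_forall fun ω =>
      lt_of_le_of_lt (hφb ω) ENNReal.ofReal_lt_top)
  have h1 : ∫ x, f x ∂(Pr.bind P) = ∫ ω, (φ ω).toReal ∂Pr := by
    rw [hlin (Pr.bind P), hbind, hout]
  have h2 : ∀ ω, (φ ω).toReal = (∫ x, g x ∂(P ω)) + C := by
    intro ω; haveI := hp ω
    rw [← hlin (P ω), hfg (P ω)]
  have h3 : ∫ ω, (φ ω).toReal ∂Pr = (∫ ω, ∫ x, g x ∂(P ω) ∂Pr) + C := by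
    simp_rw [h2]
    rw [integral_add ?_ (integrable_const C)]
    · simp
    · refine aux_integrable_bdd ?_ (C := C) ?_
      · have : (fun ω => ∫ x, g x ∂(P ω)) = fun ω => (φ ω).toReal - C := by
          funext ω; rw [h2 ω]; ring
        rw [this]
        exact ((hφm.ennreal_toReal.sub measurable_const)).aestronglyMeasurable
      · intro ω
        haveI := hp ω
        calc ‖∫ x, g x ∂(P ω)‖ ≤ ∫ x, ‖g x‖ ∂(P ω) := norm_integral_le_integral_norm _
          _ ≤ ∫ _, C ∂(P ω) := integral_mono (hgint (P ω)).norm (integrable_const C)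
              fun x => by simpa [Real.norm_eq_abs] using hgb x
          _ = C := by simp
  rw [hfg (Pr.bind P)] at h1
  rw [h3] at h1
  linarith

end Aux

section Bridge


variable {X : Type*} [MeasurableSpace X] {k : X → X → ℝ}
  {H : Type*} [NormedAddCommGroup H] [InnerProductSpace ℝ H] [CompleteSpace H]

lemma aux_integrable_bdd' {α E : Type*} [MeasurableSpace α] [NormedAddCommGroup E]
    {μ : Measure α} [IsFiniteMeasure μ]
    {f : α → E} (hf : AEStronglyMeasurable f μ) {C : ℝ} (h : ∀ x, ‖f x‖ ≤ C) :
    Integrable f μ :=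
  (integrable_const C).mono' hf (Eventually.of_forall h)

lemma aux_F_bound (hk : IsKernel k) (F : FeatureMap k H) :
    ∃ B : ℝ, 0 ≤ B ∧ ∀ x, ‖F.toFun x‖ ≤ B := by
  obtain ⟨C, hC⟩ := hk.bounded
  refine ⟨Real.sqrt (max C 0), Real.sqrt_nonneg _, fun x => ?_⟩
  rw [Real.le_sqrt (norm_nonneg _) (le_max_right _ _)]
  calc ‖F.toFun x‖ ^ 2 = ⟪F.toFun x, F.toFun x⟫ := (real_inner_self_eq_norm_sq _).symm
    _ = k x x := F.repro x x
    _ ≤ |k x x| := le_abs_self _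
    _ ≤ C := hC x x
    _ ≤ max C 0 := le_max_left _ _

lemma aux_F_int (hk : IsKernel k) (F : FeatureMap k H) (μ : Measure X) [IsFiniteMeasure μ] :
    Integrable F.toFun μ := by
  obtain ⟨B, _, hB⟩ := aux_F_bound hk F
  exact aux_integrable_bdd' F.stronglyMeasurable.aestronglyMeasurable hB

lemma aux_pair (hk : IsKernel k) (F : FeatureMap k H) (μ : Measure X) [IsFiniteMeasure μ]
    (y : X) : ⟪F.toFun y, meanEmb F μ⟫ = ∫ x, k x y ∂μ := by
  rw [meanEmb, ← integral_inner (aux_F_int hk F μ) (F.toFun y)]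
  refine integral_congr_ae (Eventually.of_forall fun x => ?_)
  show ⟪F.toFun y, F.toFun x⟫ = k x y
  exact (F.repro y x).trans (hk.symm y x)

lemma aux_meanEmb_norm (hk : IsKernel k) (F : FeatureMap k H) {B : ℝ}
    (hB : ∀ x, ‖F.toFun x‖ ≤ B) (μ : Measure X) [IsProbabilityMeasure μ] :
    ‖meanEmb F μ‖ ≤ B := by
  calc ‖meanEmb F μ‖ ≤ B * (μ Set.univ).toReal :=
        norm_integral_le_of_norm_le_const (Eventually.of_forall hB)
    _ = B := by simp

end Bridge

section Bridge2

variable {X : Type*} [MeasurableSpace X] {k : X → X → ℝ}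
  {H : Type*} [NormedAddCommGroup H] [InnerProductSpace ℝ H] [CompleteSpace H]

lemma aux_e_meas {Ω : Type*} [MeasurableSpace Ω] (F : FeatureMap k H)
    (P : Ω → Measure X) (hm : Measurable P) (hp : ∀ ω, IsProbabilityMeasure (P ω)) :
    StronglyMeasurable fun ω => meanEmb F (P ω) := by
  let κ : Kernel Ω X := ⟨P, hm⟩
  haveI : IsMarkovKernel κ := ⟨hp⟩
  have h : StronglyMeasurable (Function.uncurry fun (_ : Ω) (x : X) => F.toFun x) :=
    F.stronglyMeasurable.comp_measurable measurable_snd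
  exact h.integral_kernel_prod_right (κ := κ)

lemma aux_m_eq {Ω : Type*} [MeasurableSpace Ω] (hk : IsKernel k) (F : FeatureMap k H)
    (Pr : Measure Ω) [IsProbabilityMeasure Pr]
    (P : Ω → Measure X) (hm : Measurable P) (hp : ∀ ω, IsProbabilityMeasure (P ω)) :
    ∫ ω, meanEmb F (P ω) ∂Pr = meanEmb F (Pr.bind P) := by
  haveI := aux_bind_prob Pr P hm hp
  obtain ⟨B, hB0, hB⟩ := aux_F_bound hk F
  obtain ⟨C, hC⟩ := hk.bounded
  have heint : Integrable (fun ω => meanEmb F (P ω)) Pr :=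
    aux_integrable_bdd' (aux_e_meas F P hm hp).aestronglyMeasurable
      (fun ω => haveI := hp ω; aux_meanEmb_norm hk F hB (P ω))
  suffices hsuff : ∀ v ∈ Submodule.span ℝ (Set.range F.toFun),
      ⟪v, ∫ ω, meanEmb F (P ω) ∂Pr⟫ = ⟪v, meanEmb F (Pr.bind P)⟫ by
    exact F.dense_span.eq_of_inner_right ℝ fun v hv => hsuff v hv
  intro v hv
  induction hv using Submodule.span_induction with
  | mem w hw =>
    obtain ⟨y, rfl⟩ := hw
    rw [← integral_inner heint (F.toFun y)]
    have h1 : ∀ ω, ⟪F.toFun y, meanEmb F (P ω)⟫ = ∫ x, k x y ∂(P ω) := fun ω =>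
      haveI := hp ω; aux_pair hk F (P ω) y
    rw [aux_pair hk F (Pr.bind P) y,
      aux_integral_bind Pr P hm hp (aux_k_meas hk.measurable y) (fun x => hC x y)]
    exact integral_congr_ae (Eventually.of_forall h1)
  | zero => simp
  | add u w _ _ hu hw => rw [inner_add_left, inner_add_left, hu, hw]
  | smul a u _ hu => rw [real_inner_smul_left, real_inner_smul_left, hu]

lemma aux_fwd (hk : IsKernel k) (hinj : Function.Injective (signedMeanEmb k))
    (F : FeatureMap k H)
    (μ₁ ν₁ μ₂ ν₂ : Measure X) [IsProbabilityMeasure μ₁] [IsProbabilityMeasure ν₁]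
    [IsProbabilityMeasure μ₂] [IsProbabilityMeasure ν₂]
    {α : ℝ} (hα : α ≠ 0)
    (h : meanEmb F μ₁ - meanEmb F ν₁ = α • (meanEmb F μ₂ - meanEmb F ν₂)) :
    ∀ A : Set X, MeasurableSet A →
      (μ₁ A).toReal - (ν₁ A).toReal = α * ((μ₂ A).toReal - (ν₂ A).toReal) := by
  obtain ⟨C, hC⟩ := hk.bounded
  have hpair : ∀ y, (∫ x, k x y ∂μ₁) - (∫ x, k x y ∂ν₁)
      = α * ((∫ x, k x y ∂μ₂) - (∫ x, k x y ∂ν₂)) := by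
    intro y
    have h2 := congrArg (fun v => ⟪F.toFun y, v⟫) h
    simpa only [inner_sub_right, real_inner_smul_right, aux_pair hk F _ y] using h2
  intro A hA
  rcases lt_or_gt_of_ne hα with hneg | hpos
  · set c : ℝ≥0 := Real.toNNReal (-α) with hc
    have hcr : (c : ℝ≥0∞).toReal = -α := by
      simp [hc, Real.coe_toNNReal _ (by linarith : (0:ℝ) ≤ -α)]
    have hmeq : μ₁ + c • μ₂ = ν₁ + c • ν₂ := by
      refine aux_measure_eq hk.measurable hC hinj _ _ (fun y => ?_)
      rw [ENNReal.smul_def c μ₂, ENNReal.smul_def c ν₂,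
        integral_add_measure (aux_k_int hk.measurable hC y μ₁)
          ((aux_k_int hk.measurable hC y μ₂).smul_measure (by simp : (c:ℝ≥0∞) ≠ ⊤)),
        integral_add_measure (aux_k_int hk.measurable hC y ν₁)
          ((aux_k_int hk.measurable hC y ν₂).smul_measure (by simp : (c:ℝ≥0∞) ≠ ⊤)),
        integral_smul_measure, integral_smul_measure, hcr]
      have h3 := hpair y
      rw [smul_eq_mul, smul_eq_mul]
      linarith
    have h4 := congrArg (fun m => ((m : Measure X) A).toReal) hmeq
    simp only [Measure.add_apply, Measure.smul_apply, ENNReal.smul_def, smul_eq_mul] at h4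
    rw [ENNReal.toReal_add (measure_ne_top _ _) (by finiteness),
      ENNReal.toReal_add (measure_ne_top _ _) (by finiteness),
      ENNReal.toReal_mul, ENNReal.toReal_mul, hcr] at h4
    linarith
  · set c : ℝ≥0 := Real.toNNReal α with hc
    have hcr : (c : ℝ≥0∞).toReal = α := by
      simp [hc, Real.coe_toNNReal _ (le_of_lt hpos)]
    have hmeq : μ₁ + c • ν₂ = ν₁ + c • μ₂ := by
      refine aux_measure_eq hk.measurable hC hinj _ _ (fun y => ?_)
      rw [ENNReal.smul_def c ν₂, ENNReal.smul_def c μ₂,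
        integral_add_measure (aux_k_int hk.measurable hC y μ₁)
          ((aux_k_int hk.measurable hC y ν₂).smul_measure (by simp : (c:ℝ≥0∞) ≠ ⊤)),
        integral_add_measure (aux_k_int hk.measurable hC y ν₁)
          ((aux_k_int hk.measurable hC y μ₂).smul_measure (by simp : (c:ℝ≥0∞) ≠ ⊤)),
        integral_smul_measure, integral_smul_measure, hcr]
      have h3 := hpair y
      rw [smul_eq_mul, smul_eq_mul]
      linarith
    have h4 := congrArg (fun m => ((m : Measure X) A).toReal) hmeq
    simp only [Measure.add_apply, Measure.smul_apply, ENNReal.smul_def, smul_eq_mul] at h4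
    rw [ENNReal.toReal_add (measure_ne_top _ _) (by finiteness),
      ENNReal.toReal_add (measure_ne_top _ _) (by finiteness),
      ENNReal.toReal_mul, ENNReal.toReal_mul, hcr] at h4
    linarith

lemma aux_bwd (hk : IsKernel k) (F : FeatureMap k H)
    (μ₁ ν₁ μ₂ ν₂ : Measure X) [IsProbabilityMeasure μ₁] [IsProbabilityMeasure ν₁]
    [IsProbabilityMeasure μ₂] [IsProbabilityMeasure ν₂]
    {α : ℝ} (hα : α ≠ 0)
    (h : ∀ A : Set X, MeasurableSet A →
      (μ₁ A).toReal - (ν₁ A).toReal = α * ((μ₂ A).toReal - (ν₂ A).toReal)) :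
    meanEmb F μ₁ - meanEmb F ν₁ = α • (meanEmb F μ₂ - meanEmb F ν₂) := by
  have hadd : ∀ (ρ σ : Measure X) [IsFiniteMeasure ρ] [IsFiniteMeasure σ],
      meanEmb F (ρ + σ) = meanEmb F ρ + meanEmb F σ := by
    intro ρ σ _ _
    exact integral_add_measure (aux_F_int hk F ρ) (aux_F_int hk F σ)
  have hsmul : ∀ (c : ℝ≥0) (ρ : Measure X),
      meanEmb F ((c : ℝ≥0) • ρ) = (c : ℝ) • meanEmb F ρ := by
    intro c ρ
    exact integral_smul_nnreal_measure F.toFun c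
  rcases lt_or_gt_of_ne hα with hneg | hpos
  · set c : ℝ≥0 := Real.toNNReal (-α) with hc
    have hcc : (c : ℝ) = -α := by
      simp [hc, Real.coe_toNNReal _ (by linarith : (0:ℝ) ≤ -α)]
    have hmeq : μ₁ + c • μ₂ = ν₁ + c • ν₂ := by
      ext A hA
      have h5 := h A hA
      refine (ENNReal.toReal_eq_toReal_iff' (by finiteness) (by finiteness)).mp ?_
      simp only [Measure.add_apply, Measure.smul_apply, ENNReal.smul_def, smul_eq_mul]
      rw [ENNReal.toReal_add (measure_ne_top _ _) (by finiteness),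
        ENNReal.toReal_add (measure_ne_top _ _) (by finiteness),
        ENNReal.toReal_mul, ENNReal.toReal_mul]
      have : ((c : ℝ≥0∞)).toReal = -α := by simpa using hcc
      rw [this]; linarith
    have h6 := congrArg (meanEmb F) hmeq
    rw [hadd μ₁ (c • μ₂), hadd ν₁ (c • ν₂), hsmul c μ₂, hsmul c ν₂, hcc] at h6
    rw [smul_sub, sub_eq_sub_iff_add_eq_add]
    have h7 : meanEmb F μ₁ - α • meanEmb F μ₂ = meanEmb F ν₁ - α • meanEmb F ν₂ := by
      rw [neg_smul, ← sub_eq_add_neg, neg_smul, ← sub_eq_add_neg] at h6; exact h6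
    rw [sub_eq_sub_iff_add_eq_add] at h7
    rw [h7]; exact add_comm _ _
  · set c : ℝ≥0 := Real.toNNReal α with hc
    have hcc : (c : ℝ) = α := by simp [hc, Real.coe_toNNReal _ (le_of_lt hpos)]
    have hmeq : μ₁ + c • ν₂ = ν₁ + c • μ₂ := by
      ext A hA
      have h5 := h A hA
      refine (ENNReal.toReal_eq_toReal_iff' (by finiteness) (by finiteness)).mp ?_
      simp only [Measure.add_apply, Measure.smul_apply, ENNReal.smul_def, smul_eq_mul]
      rw [ENNReal.toReal_add (measure_ne_top _ _) (by finiteness),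
        ENNReal.toReal_add (measure_ne_top _ _) (by finiteness),
        ENNReal.toReal_mul, ENNReal.toReal_mul]
      have : ((c : ℝ≥0∞)).toReal = α := by simpa using hcc
      rw [this]; linarith
    have h6 := congrArg (meanEmb F) hmeq
    rw [hadd μ₁ (c • ν₂), hadd ν₁ (c • μ₂), hsmul c ν₂, hsmul c μ₂, hcc] at h6
    rw [smul_sub, sub_eq_sub_iff_add_eq_add, h6]
    exact add_comm _ _

end Bridge2

theorem stmt_4
    {X : Type*} [TopologicalSpace X] [PolishSpace X] [LocallyCompactSpace X]
    [MeasurableSpace X] [BorelSpace X]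
    {k : X → X → ℝ} (hk : IsKernel k) (hk0 : IsC0Universal k)
    {H : Type*} [NormedAddCommGroup H] [InnerProductSpace ℝ H] [CompleteSpace H]
    (F : FeatureMap k H)
    {Ω : Type*} [MeasurableSpace Ω] (Pr : Measure Ω) [IsProbabilityMeasure Pr]
    (P₁ P₂ : Ω → Measure X)
    (hP₁ : ∀ ω, IsProbabilityMeasure (P₁ ω)) (hP₂ : ∀ ω, IsProbabilityMeasure (P₂ ω))
    (hP₁m : Measurable P₁) (hP₂m : Measurable P₂)
    (hV₁ : 0 < kerVar F Pr P₁) (hV₂ : 0 < kerVar F Pr P₂) :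
    ((kerCorr F Pr P₁ P₂ = 1 ∨ kerCorr F Pr P₁ P₂ = -1) ↔
      ∃ α : ℝ, α ≠ 0 ∧
        ∀ᵐ ω ∂Pr, ∀ A : Set X, MeasurableSet A →
          (P₁ ω A).toReal - (Pr.bind P₁ A).toReal
            = α * ((P₂ ω A).toReal - (Pr.bind P₂ A).toReal)) ∧
    (∀ α : ℝ, α ≠ 0 →
      (∀ᵐ ω ∂Pr, ∀ A : Set X, MeasurableSet A →
          (P₁ ω A).toReal - (Pr.bind P₁ A).toReal
            = α * ((P₂ ω A).toReal - (Pr.bind P₂ A).toReal)) →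
      ((0 < α ↔ kerCorr F Pr P₁ P₂ = 1) ∧ (α < 0 ↔ kerCorr F Pr P₁ P₂ = -1))) := by
  classical
  obtain ⟨hc0, hinj⟩ := hk0
  obtain ⟨B, hB0, hB⟩ := aux_F_bound hk F
  haveI hb₁ : IsProbabilityMeasure (Pr.bind P₁) := aux_bind_prob Pr P₁ hP₁m hP₁
  haveI hb₂ : IsProbabilityMeasure (Pr.bind P₂) := aux_bind_prob Pr P₂ hP₂m hP₂
  set e₁ : Ω → H := fun ω => meanEmb F (P₁ ω) with he₁def
  set e₂ : Ω → H := fun ω => meanEmb F (P₂ ω) with he₂def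
  have he₁m : StronglyMeasurable e₁ := aux_e_meas F P₁ hP₁m hP₁
  have he₂m : StronglyMeasurable e₂ := aux_e_meas F P₂ hP₂m hP₂
  have he₁b : ∀ ω, ‖e₁ ω‖ ≤ B := fun ω => haveI := hP₁ ω; aux_meanEmb_norm hk F hB _
  have he₂b : ∀ ω, ‖e₂ ω‖ ≤ B := fun ω => haveI := hP₂ ω; aux_meanEmb_norm hk F hB _
  set m₁ : H := ∫ ω, e₁ ω ∂Pr with hm₁def
  set m₂ : H := ∫ ω, e₂ ω ∂Pr with hm₂def
  have hm₁b : ‖m₁‖ ≤ B := by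
    calc ‖m₁‖ ≤ B * (Pr Set.univ).toReal :=
          norm_integral_le_of_norm_le_const (Eventually.of_forall he₁b)
      _ = B := by simp
  have hm₂b : ‖m₂‖ ≤ B := by
    calc ‖m₂‖ ≤ B * (Pr Set.univ).toReal :=
          norm_integral_le_of_norm_le_const (Eventually.of_forall he₂b)
      _ = B := by simp
  set g₁ : Ω → H := fun ω => e₁ ω - m₁ with hg₁def
  set g₂ : Ω → H := fun ω => e₂ ω - m₂ with hg₂def
  have hg₁b : ∀ ω, ‖g₁ ω‖ ≤ B + B := fun ω =>
    (norm_sub_le _ _).trans (add_le_add (he₁b ω) hm₁b)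
  have hg₂b : ∀ ω, ‖g₂ ω‖ ≤ B + B := fun ω =>
    (norm_sub_le _ _).trans (add_le_add (he₂b ω) hm₂b)
  have hg₁mem : MemLp g₁ 2 Pr :=
    MemLp.of_bound ((he₁m.sub stronglyMeasurable_const).aestronglyMeasurable) _
      (Eventually.of_forall hg₁b)
  have hg₂mem : MemLp g₂ 2 Pr :=
    MemLp.of_bound ((he₂m.sub stronglyMeasurable_const).aestronglyMeasurable) _
      (Eventually.of_forall hg₂b)
  set G₁ : Lp H 2 Pr := hg₁mem.toLp g₁ with hG₁def
  set G₂ : Lp H 2 Pr := hg₂mem.toLp g₂ with hG₂def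
  have hG₁ : (G₁ : Ω → H) =ᵐ[Pr] g₁ := hg₁mem.coeFn_toLp
  have hG₂ : (G₂ : Ω → H) =ᵐ[Pr] g₂ := hg₂mem.coeFn_toLp
  have hc12 : ⟪G₁, G₂⟫ = ∫ ω, ⟪g₁ ω, g₂ ω⟫ ∂Pr := by
    rw [MeasureTheory.L2.inner_def]
    exact integral_congr_ae (by filter_upwards [hG₁, hG₂] with ω w1 w2; rw [w1, w2])
  have hc11 : ⟪G₁, G₁⟫ = ∫ ω, ⟪g₁ ω, g₁ ω⟫ ∂Pr := by
    rw [MeasureTheory.L2.inner_def]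
    exact integral_congr_ae (by filter_upwards [hG₁] with ω w1; rw [w1])
  have hc22 : ⟪G₂, G₂⟫ = ∫ ω, ⟪g₂ ω, g₂ ω⟫ ∂Pr := by
    rw [MeasureTheory.L2.inner_def]
    exact integral_congr_ae (by filter_upwards [hG₂] with ω w2; rw [w2])
  have hcovI : kerCov F Pr P₁ P₂ = ⟪G₁, G₂⟫ := hc12.symm
  have hvar₁ : kerVar F Pr P₁ = ‖G₁‖ ^ 2 := by
    have : kerVar F Pr P₁ = ⟪G₁, G₁⟫ := hc11.symm
    rw [this, real_inner_self_eq_norm_sq]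
  have hvar₂ : kerVar F Pr P₂ = ‖G₂‖ ^ 2 := by
    have : kerVar F Pr P₂ = ⟪G₂, G₂⟫ := hc22.symm
    rw [this, real_inner_self_eq_norm_sq]
  have hG₁pos : 0 < ‖G₁‖ := by
    rcases (norm_nonneg G₁).lt_or_eq with h | h
    · exact h
    · exfalso; rw [hvar₁, ← h] at hV₁; simp at hV₁
  have hG₂pos : 0 < ‖G₂‖ := by
    rcases (norm_nonneg G₂).lt_or_eq with h | h
    · exact h
    · exfalso; rw [hvar₂, ← h] at hV₂; simp at hV₂
  have hsq₁ : Real.sqrt (kerVar F Pr P₁) = ‖G₁‖ := by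
    rw [hvar₁, Real.sqrt_sq (norm_nonneg _)]
  have hsq₂ : Real.sqrt (kerVar F Pr P₂) = ‖G₂‖ := by
    rw [hvar₂, Real.sqrt_sq (norm_nonneg _)]
  have hcorr : kerCorr F Pr P₁ P₂ = ⟪G₁, G₂⟫ / (‖G₁‖ * ‖G₂‖) := by
    rw [kerCorr, hcovI, hsq₁, hsq₂]
  have hme₁ : m₁ = meanEmb F (Pr.bind P₁) := aux_m_eq hk F Pr P₁ hP₁m hP₁
  have hme₂ : m₂ = meanEmb F (Pr.bind P₂) := aux_m_eq hk F Pr P₂ hP₂m hP₂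
  -- vector a.e. relation implies the set relation
  have vec_to_sets : ∀ α : ℝ, α ≠ 0 → (∀ᵐ ω ∂Pr, g₁ ω = α • g₂ ω) →
      (∀ᵐ ω ∂Pr, ∀ A : Set X, MeasurableSet A →
        (P₁ ω A).toReal - (Pr.bind P₁ A).toReal
          = α * ((P₂ ω A).toReal - (Pr.bind P₂ A).toReal)) := by
    intro α hα hae
    filter_upwards [hae] with ω hω
    haveI := hP₁ ω; haveI := hP₂ ω
    have hvec : meanEmb F (P₁ ω) - meanEmb F (Pr.bind P₁)
        = α • (meanEmb F (P₂ ω) - meanEmb F (Pr.bind P₂)) := by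
      rw [← hme₁, ← hme₂]; exact hω
    exact aux_fwd hk hinj F _ _ _ _ hα hvec
  -- set relation implies vector a.e. relation
  have sets_to_vec : ∀ α : ℝ, α ≠ 0 →
      (∀ᵐ ω ∂Pr, ∀ A : Set X, MeasurableSet A →
        (P₁ ω A).toReal - (Pr.bind P₁ A).toReal
          = α * ((P₂ ω A).toReal - (Pr.bind P₂ A).toReal)) →
      (∀ᵐ ω ∂Pr, g₁ ω = α • g₂ ω) := by
    intro α hα hset
    filter_upwards [hset] with ω hω
    haveI := hP₁ ω; haveI := hP₂ ω
    have hvec := aux_bwd hk F (P₁ ω) (Pr.bind P₁) (P₂ ω) (Pr.bind P₂) hα hω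
    show e₁ ω - m₁ = α • (e₂ ω - m₂)
    rw [hme₁, hme₂]; exact hvec
  -- sign computation
  have hsign : ∀ α : ℝ, (∀ᵐ ω ∂Pr, g₁ ω = α • g₂ ω) →
      kerCorr F Pr P₁ P₂ = α / |α| := by
    intro α hae
    have hcov' : kerCov F Pr P₁ P₂ = α * kerVar F Pr P₂ := by
      show (∫ ω, ⟪g₁ ω, g₂ ω⟫ ∂Pr) = α * ∫ ω, ⟪g₂ ω, g₂ ω⟫ ∂Pr
      rw [← integral_const_mul]
      exact integral_congr_ae
        (by filter_upwards [hae] with ω w; rw [w, real_inner_smul_left])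
    have hvar' : kerVar F Pr P₁ = α ^ 2 * kerVar F Pr P₂ := by
      show (∫ ω, ⟪g₁ ω, g₁ ω⟫ ∂Pr) = α ^ 2 * ∫ ω, ⟪g₂ ω, g₂ ω⟫ ∂Pr
      rw [← integral_const_mul]
      refine integral_congr_ae ?_
      filter_upwards [hae] with ω w
      rw [w, real_inner_smul_left, real_inner_smul_right]; ring
    rw [kerCorr, hcov', hvar', Real.sqrt_mul (sq_nonneg α), Real.sqrt_sq_eq_abs,
      mul_assoc, Real.mul_self_sqrt hV₂.le,
      mul_div_mul_right _ _ (ne_of_gt hV₂)]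
  -- from equality case of Cauchy–Schwarz, extract the a.e. vector relation
  have extract : ∀ β : ℝ, β ≠ 0 → (‖G₂‖ • G₁ = β • G₂) →
      ∀ᵐ ω ∂Pr, g₁ ω = (β / ‖G₂‖) • g₂ ω := by
    intro β hβ heq
    have h4 : ((‖G₂‖ • G₁ : Lp H 2 Pr) : Ω → H) =ᵐ[Pr] ((β • G₂ : Lp H 2 Pr) : Ω → H) := by
      rw [heq]
    filter_upwards [h4, Lp.coeFn_smul ‖G₂‖ G₁, Lp.coeFn_smul β G₂, hG₁, hG₂]
      with ω w1 w2 w3 w4 w5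
    simp only [Pi.smul_apply] at w2 w3
    have w6 : ‖G₂‖ • g₁ ω = β • g₂ ω := by rw [← w4, ← w5, ← w2, ← w3, w1]
    apply smul_right_injective H (ne_of_gt hG₂pos)
    show ‖G₂‖ • g₁ ω = ‖G₂‖ • ((β / ‖G₂‖) • g₂ ω)
    rw [w6, smul_smul, mul_comm, div_mul_cancel₀ β (ne_of_gt hG₂pos)]
  refine ⟨⟨?_, ?_⟩, ?_⟩
  · rintro (h1 | h1)
    · have hinner : ⟪G₁, G₂⟫ = ‖G₁‖ * ‖G₂‖ := by
        rw [hcorr] at h1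
        exact (div_eq_one_iff_eq (mul_pos hG₁pos hG₂pos).ne').mp h1
      have heq : ‖G₂‖ • G₁ = ‖G₁‖ • G₂ := inner_eq_norm_mul_iff_real.mp hinner
      refine ⟨‖G₁‖ / ‖G₂‖, div_ne_zero (ne_of_gt hG₁pos) (ne_of_gt hG₂pos), ?_⟩
      exact vec_to_sets _ (div_ne_zero (ne_of_gt hG₁pos) (ne_of_gt hG₂pos))
        (extract ‖G₁‖ (ne_of_gt hG₁pos) heq)
    · have hinner : ⟪G₁, G₂⟫ = -(‖G₁‖ * ‖G₂‖) := by
        rw [hcorr] at h1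
        have := (div_eq_iff (mul_pos hG₁pos hG₂pos).ne').mp h1
        linarith
      have hinner' : ⟪G₁, -G₂⟫ = ‖G₁‖ * ‖-G₂‖ := by
        rw [inner_neg_right, hinner, norm_neg]; ring
      have heq0 : ‖-G₂‖ • G₁ = ‖G₁‖ • (-G₂) := inner_eq_norm_mul_iff_real.mp hinner'
      have heq : ‖G₂‖ • G₁ = (-‖G₁‖) • G₂ := by
        rw [norm_neg] at heq0; rw [heq0, smul_neg, neg_smul]
      refine ⟨-‖G₁‖ / ‖G₂‖,
        div_ne_zero (neg_ne_zero.mpr (ne_of_gt hG₁pos)) (ne_of_gt hG₂pos), ?_⟩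
      exact vec_to_sets _
        (div_ne_zero (neg_ne_zero.mpr (ne_of_gt hG₁pos)) (ne_of_gt hG₂pos))
        (extract (-‖G₁‖) (neg_ne_zero.mpr (ne_of_gt hG₁pos)) heq)
  · rintro ⟨α, hα, hset⟩
    have hae := sets_to_vec α hα hset
    have hs := hsign α hae
    rcases lt_or_gt_of_ne hα with hneg | hpos
    · right; rw [hs, abs_of_neg hneg, div_neg, div_self hα]
    · left; rw [hs, abs_of_pos hpos, div_self hα]
  · intro α hα hset
    have hae := sets_to_vec α hα hset
    have hs := hsign α hae
    rcases lt_or_gt_of_ne hα with hneg | hpos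
    · have hC : kerCorr F Pr P₁ P₂ = -1 := by
        rw [hs, abs_of_neg hneg, div_neg, div_self hα]
      constructor
      · constructor
        · intro h; exact absurd h (not_lt_of_gt hneg)
        · intro h; rw [hC] at h; norm_num at h
      · exact ⟨fun _ => hC, fun _ => hneg⟩
    · have hC : kerCorr F Pr P₁ P₂ = 1 := by
        rw [hs, abs_of_pos hpos, div_self hα]
      constructor
      · exact ⟨fun _ => hC, fun _ => hpos⟩
      · constructor
        · intro h; exact absurd h (not_lt_of_gt hpos)
        · intro h; rw [hC] at h; norm_num at h


end
end

section
/- Let (X_{1,1}, X_{2,1}, X_{1,2}, X_{2,2}) be observations from the partially exchangeable model X_{i,j} | (P̃₁,P̃₂) iid ∼ P̃ᵢ, with (P̃₁,P̃₂) ∼ Q. Then Cov_k(P̃₁,P̃₂) = Cov_{H_k}(k(X_{1,1},·), k(X_{2,1},·)) and Var_k(P̃ᵢ) = Cov_{H_k}(k(X_{i,1},·), k(X_{i,2},·)) for i = 1,2. In particular, when the kernel variances are strictly positive, Corr_k(P̃₁,P̃₂) = Cov_{H_k}(k(X_{1,1},·), k(X_{2,1},·)) / (√Cov_{H_k}(k(X_{1,1},·),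 k(X_{1,2},·)) · √Cov_{H_k}(k(X_{2,1},·), k(X_{2,2},·))). -/
open MeasureTheory ProbabilityTheory Filter
open scoped RealInnerProductSpace ENNReal NNReal

noncomputable section

/-- Covariance of two Hilbert-space-valued random elements,
`Cov_H(U,V) = E[⟪U - E[U], V - E[V]⟫]`. -/
def hilbCov {Ω : Type*} [MeasurableSpace Ω] {H : Type*}
    [NormedAddCommGroup H] [InnerProductSpace ℝ H] [CompleteSpace H]
    (Pr : Measure Ω) (U V : Ω → H) : ℝ :=
  ∫ ω, ⟪U ω - ∫ ω', U ω' ∂Pr, V ω - ∫ ω', V ω' ∂Pr⟫ ∂Pr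

/-- The σ-algebra generated by the pair of random probability measures. -/
def mGen {X : Type*} [MeasurableSpace X] {Ω : Type*}
    (P₁ P₂ : Ω → Measure X) : MeasurableSpace Ω :=
  MeasurableSpace.comap (fun ω => (P₁ ω, P₂ ω)) inferInstance


section Helpers

open scoped RealInnerProductSpace

variable {X : Type*} [MeasurableSpace X]
  {k : X → X → ℝ}
  {H : Type*} [NormedAddCommGroup H] [InnerProductSpace ℝ H] [CompleteSpace H]
  {Ω : Type*} [MeasurableSpace Ω]

lemma bounded_integrable {α : Type*} [MeasurableSpace α] {μ : Measure α} [IsFiniteMeasure μ]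
    {E : Type*} [NormedAddCommGroup E] {f : α → E} (hf : AEStronglyMeasurable f μ)
    {M : ℝ} (hM : ∀ a, ‖f a‖ ≤ M) : Integrable f μ :=
  (integrable_const M).mono' hf (Filter.Eventually.of_forall hM)

lemma feat_norm_le (hk : IsKernel k) (F : FeatureMap k H) :
    ∀ x, ‖F.toFun x‖ ≤ Real.sqrt (max hk.bounded.choose 0) := by
  intro x
  rw [Real.le_sqrt (norm_nonneg _) (le_max_right _ _)]
  have h1 : ‖F.toFun x‖ ^ 2 = k x x := by
    rw [← F.repro x x, real_inner_self_eq_norm_sq]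
  rw [h1]
  exact le_trans (le_trans (le_abs_self _) (hk.bounded.choose_spec x x)) (le_max_left _ _)

/-- view a measurable family of measures as a kernel -/
def toKernel (Q : Ω → Measure X) (h : Measurable Q) : ProbabilityTheory.Kernel Ω X := ⟨Q, h⟩

@[simp] lemma toKernel_apply (Q : Ω → Measure X) (h : Measurable Q) (ω : Ω) :
    toKernel Q h ω = Q ω := rfl

lemma cov_expand (Pr : Measure Ω) [IsProbabilityMeasure Pr] {U V : Ω → H}
    (hU : Integrable U Pr) (hV : Integrable V Pr)
    (hUV : Integrable (fun ω => ⟪U ω, V ω⟫) Pr) :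
    ∫ ω, ⟪U ω - ∫ ω', U ω' ∂Pr, V ω - ∫ ω', V ω' ∂Pr⟫ ∂Pr
      = ∫ ω, ⟪U ω, V ω⟫ ∂Pr - ⟪∫ ω, U ω ∂Pr, ∫ ω, V ω ∂Pr⟫ := by
  set c := ∫ ω, U ω ∂Pr with hc
  set d := ∫ ω, V ω ∂Pr with hd
  have hUd : Integrable (fun ω => ⟪U ω, d⟫) Pr := by
    simpa [real_inner_comm] using ((innerSL ℝ d).integrable_comp hU)
  have hcV : Integrable (fun ω => ⟪c, V ω⟫) Pr := (innerSL ℝ c).integrable_comp hV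
  have h1 : ∫ ω, ⟪U ω, d⟫ ∂Pr = ⟪c, d⟫ := by
    calc ∫ ω, ⟪U ω, d⟫ ∂Pr = ∫ ω, ⟪d, U ω⟫ ∂Pr :=
          integral_congr_ae (Filter.Eventually.of_forall fun ω => real_inner_comm _ _)
      _ = ⟪d, c⟫ := integral_inner hU d
      _ = ⟪c, d⟫ := real_inner_comm _ _
  have h2 : ∫ ω, ⟪c, V ω⟫ ∂Pr = ⟪c, d⟫ := integral_inner hV c
  have hexp : ∀ ω, ⟪U ω - c, V ω - d⟫
      = ⟪U ω, V ω⟫ - ⟪U ω, d⟫ - (⟪c, V ω⟫ - ⟪c, d⟫) := by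
    intro ω; rw [inner_sub_left, inner_sub_right, inner_sub_right]
  calc ∫ ω, ⟪U ω - c, V ω - d⟫ ∂Pr
      = ∫ ω, (⟪U ω, V ω⟫ - ⟪U ω, d⟫ - (⟪c, V ω⟫ - ⟪c, d⟫)) ∂Pr :=
        integral_congr_ae (Filter.Eventually.of_forall fun ω => hexp ω)
    _ = (∫ ω, (⟪U ω, V ω⟫ - ⟪U ω, d⟫) ∂Pr) - ∫ ω, (⟪c, V ω⟫ - ⟪c, d⟫) ∂Pr :=
        integral_sub (hUV.sub hUd) (hcV.sub (integrable_const _))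
    _ = ((∫ ω, ⟪U ω, V ω⟫ ∂Pr) - ∫ ω, ⟪U ω, d⟫ ∂Pr)
          - ((∫ ω, ⟪c, V ω⟫ ∂Pr) - ∫ ω, (⟪c, d⟫ : ℝ) ∂Pr) := by
        rw [integral_sub hUV hUd, integral_sub hcV (integrable_const _)]
    _ = ∫ ω, ⟪U ω, V ω⟫ ∂Pr - ⟪c, d⟫ := by
        rw [h1, h2, integral_const]; simp

lemma my_integral_pair (Pr : Measure Ω) [IsProbabilityMeasure Pr]
    (κ : ProbabilityTheory.Kernel Ω (X × X)) [ProbabilityTheory.IsMarkovKernel κ]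
    {Y Z : Ω → X} (hY : Measurable Y) (hZ : Measurable Z)
    (law : Pr.map (fun ω => (Y ω, Z ω)) = (Pr ⊗ₘ κ).snd)
    {h : X × X → ℝ} (hh : StronglyMeasurable h) {M : ℝ} (hM : ∀ p, ‖h p‖ ≤ M) :
    ∫ ω, h (Y ω, Z ω) ∂Pr = ∫ ω, ∫ p, h p ∂(κ ω) ∂Pr := by
  have h1 : ∫ ω, h (Y ω, Z ω) ∂Pr = ∫ p, h p ∂(Pr.map (fun ω => (Y ω, Z ω))) :=
    (integral_map (hY.prodMk hZ).aemeasurable hh.aestronglyMeasurable).symm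
  rw [h1, law, Measure.snd, integral_map measurable_snd.aemeasurable hh.aestronglyMeasurable]
  rw [MeasureTheory.Measure.integral_compProd (f := fun z : Ω × (X × X) => h z.2)
    (bounded_integrable (hh.comp_measurable measurable_snd).aestronglyMeasurable
      (fun p => hM p.2))]

lemma law_pair (Pr : Measure Ω) [IsProbabilityMeasure Pr]
    (Q₁ Q₂ : Ω → Measure X)
    (hQ₁ : ∀ ω, IsProbabilityMeasure (Q₁ ω)) (hQ₂ : ∀ ω, IsProbabilityMeasure (Q₂ ω))
    (hQ₁m : Measurable Q₁) (hQ₂m : Measurable Q₂)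
    {Y Z : Ω → X} (hY : Measurable Y) (hZ : Measurable Z)
    (hlaw : ∀ A B : Set X, MeasurableSet A → MeasurableSet B →
      Pr (Y ⁻¹' A ∩ Z ⁻¹' B) = ∫⁻ ω, Q₁ ω A * Q₂ ω B ∂Pr) :
    Pr.map (fun ω => (Y ω, Z ω))
      = (Pr ⊗ₘ ((toKernel Q₁ hQ₁m) ×ₖ (toKernel Q₂ hQ₂m))).snd := by
  haveI : ProbabilityTheory.IsMarkovKernel (toKernel Q₁ hQ₁m) := ⟨hQ₁⟩
  haveI : ProbabilityTheory.IsMarkovKernel (toKernel Q₂ hQ₂m) := ⟨hQ₂⟩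
  haveI : IsProbabilityMeasure (Pr.map (fun ω => (Y ω, Z ω))) :=
    Measure.isProbabilityMeasure_map (hY.prodMk hZ).aemeasurable
  refine ext_of_generate_finite _ generateFrom_prod.symm isPiSystem_prod ?_ ?_
  · rintro s ⟨A, hA, B, hB, rfl⟩
    simp only [Set.mem_setOf_eq] at hA hB
    rw [Measure.map_apply (hY.prodMk hZ) (hA.prod hB)]
    have hpre : (fun ω => (Y ω, Z ω)) ⁻¹' (A ×ˢ B) = Y ⁻¹' A ∩ Z ⁻¹' B := by
      ext ω; simp [Set.mem_prod]
    rw [hpre, hlaw A B hA hB, Measure.snd_apply (hA.prod hB),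
      Measure.compProd_apply (measurable_snd (hA.prod hB))]
    refine lintegral_congr fun ω => ?_
    have : Prod.mk ω ⁻¹' (Prod.snd ⁻¹' (A ×ˢ B) : Set (Ω × (X × X))) = A ×ˢ B := rfl
    rw [this, ProbabilityTheory.Kernel.prod_apply, Measure.prod_prod, toKernel_apply,
      toKernel_apply]
  · simp

lemma inner_meanEmb (F : FeatureMap k H) {M : ℝ} (hM : ∀ x, ‖F.toFun x‖ ≤ M)
    (μ ν : Measure X) [IsProbabilityMeasure μ] [IsProbabilityMeasure ν] :
    ⟪meanEmb F μ, meanEmb F ν⟫ = ∫ x, ∫ y, k x y ∂ν ∂μ := by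
  have hFμ : Integrable F.toFun μ :=
    bounded_integrable F.stronglyMeasurable.aestronglyMeasurable hM
  have hFν : Integrable F.toFun ν :=
    bounded_integrable F.stronglyMeasurable.aestronglyMeasurable hM
  rw [real_inner_comm, meanEmb, meanEmb, ← integral_inner hFμ]
  refine integral_congr_ae (Filter.Eventually.of_forall fun x => ?_)
  dsimp only
  rw [real_inner_comm, ← integral_inner hFν]
  simp_rw [F.repro]

lemma kerCov_eq_hilbCov (hk : IsKernel k) (F : FeatureMap k H)
    (Pr : Measure Ω) [IsProbabilityMeasure Pr]
    (Q₁ Q₂ : Ω → Measure X)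
    (hQ₁ : ∀ ω, IsProbabilityMeasure (Q₁ ω)) (hQ₂ : ∀ ω, IsProbabilityMeasure (Q₂ ω))
    (hQ₁m : Measurable Q₁) (hQ₂m : Measurable Q₂)
    {Y Z : Ω → X} (hY : Measurable Y) (hZ : Measurable Z)
    (hlaw : ∀ A B : Set X, MeasurableSet A → MeasurableSet B →
      Pr (Y ⁻¹' A ∩ Z ⁻¹' B) = ∫⁻ ω, Q₁ ω A * Q₂ ω B ∂Pr) :
    kerCov F Pr Q₁ Q₂ = hilbCov Pr (fun ω => F.toFun (Y ω)) (fun ω => F.toFun (Z ω)) := by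
  classical
  set B : ℝ := Real.sqrt (max hk.bounded.choose 0) with hBdef
  have hB : ∀ x, ‖F.toFun x‖ ≤ B := feat_norm_le hk F
  have hB0 : 0 ≤ B := Real.sqrt_nonneg _
  set κ₁ := toKernel Q₁ hQ₁m
  set κ₂ := toKernel Q₂ hQ₂m
  haveI : ProbabilityTheory.IsMarkovKernel κ₁ := ⟨hQ₁⟩
  haveI : ProbabilityTheory.IsMarkovKernel κ₂ := ⟨hQ₂⟩
  have law := law_pair Pr Q₁ Q₂ hQ₁ hQ₂ hQ₁m hQ₂m hY hZ hlaw
  -- integrability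
  have hFY : Integrable (fun ω => F.toFun (Y ω)) Pr :=
    bounded_integrable (F.stronglyMeasurable.comp_measurable hY).aestronglyMeasurable
      (fun ω => hB (Y ω))
  have hFZ : Integrable (fun ω => F.toFun (Z ω)) Pr :=
    bounded_integrable (F.stronglyMeasurable.comp_measurable hZ).aestronglyMeasurable
      (fun ω => hB (Z ω))
  have hFYZ : Integrable (fun ω => ⟪F.toFun (Y ω), F.toFun (Z ω)⟫) Pr := by
    refine bounded_integrable ((F.stronglyMeasurable.comp_measurable hY).inner
      (F.stronglyMeasurable.comp_measurable hZ)).aestronglyMeasurable (M := B * B) ?_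
    intro ω
    exact le_trans (abs_real_inner_le_norm _ _)
      (mul_le_mul (hB _) (hB _) (norm_nonneg _) hB0)
  have hmeanbound : ∀ (μ : Measure X) [IsProbabilityMeasure μ], ‖meanEmb F μ‖ ≤ B := by
    intro μ _
    have := norm_integral_le_of_norm_le_const (μ := μ) (f := F.toFun) (C := B)
      (Filter.Eventually.of_forall hB)
    simpa [meanEmb] using this
  have hmeas₁ : StronglyMeasurable (fun ω => meanEmb F (Q₁ ω)) := by
    have := MeasureTheory.StronglyMeasurable.integral_kernel_prod_right' (κ := κ₁)
      (f := fun p : Ω × X => F.toFun p.2)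
      (F.stronglyMeasurable.comp_measurable measurable_snd)
    exact this
  have hmeas₂ : StronglyMeasurable (fun ω => meanEmb F (Q₂ ω)) := by
    have := MeasureTheory.StronglyMeasurable.integral_kernel_prod_right' (κ := κ₂)
      (f := fun p : Ω × X => F.toFun p.2)
      (F.stronglyMeasurable.comp_measurable measurable_snd)
    exact this
  have hM₁ : Integrable (fun ω => meanEmb F (Q₁ ω)) Pr :=
    bounded_integrable hmeas₁.aestronglyMeasurable
      (fun ω => by haveI := hQ₁ ω; exact hmeanbound (Q₁ ω))
  have hM₂ : Integrable (fun ω => meanEmb F (Q₂ ω)) Pr :=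
    bounded_integrable hmeas₂.aestronglyMeasurable
      (fun ω => by haveI := hQ₂ ω; exact hmeanbound (Q₂ ω))
  have hM₁₂ : Integrable (fun ω => ⟪meanEmb F (Q₁ ω), meanEmb F (Q₂ ω)⟫) Pr := by
    refine bounded_integrable (hmeas₁.inner hmeas₂).aestronglyMeasurable (M := B * B) ?_
    intro ω
    haveI := hQ₁ ω; haveI := hQ₂ ω
    exact le_trans (abs_real_inner_le_norm _ _)
      (mul_le_mul (hmeanbound _) (hmeanbound _) (norm_nonneg _) hB0)
  -- mean equalities
  have key : ∀ (h : X × X → ℝ), StronglyMeasurable h → ∀ M : ℝ, (∀ p, ‖h p‖ ≤ M) →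
      ∫ ω, h (Y ω, Z ω) ∂Pr = ∫ ω, ∫ x, ∫ y, h (x, y) ∂(Q₂ ω) ∂(Q₁ ω) ∂Pr := by
    intro h hh M hM
    rw [my_integral_pair Pr (κ₁ ×ₖ κ₂) hY hZ law hh hM]
    refine integral_congr_ae (Filter.Eventually.of_forall fun ω => ?_)
    dsimp only
    haveI := hQ₁ ω; haveI := hQ₂ ω
    rw [ProbabilityTheory.Kernel.prod_apply, toKernel_apply, toKernel_apply,
      integral_prod _ (bounded_integrable hh.aestronglyMeasurable hM)]
  have mean₁ : ∫ ω, F.toFun (Y ω) ∂Pr = ∫ ω, meanEmb F (Q₁ ω) ∂Pr := by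
    refine ext_inner_left ℝ fun v => ?_
    rw [← integral_inner hFY v, ← integral_inner hM₁ v]
    have hsm : StronglyMeasurable (fun p : X × X => ⟪v, F.toFun p.1⟫) :=
      stronglyMeasurable_const.inner (F.stronglyMeasurable.comp_measurable measurable_fst)
    have hbd : ∀ p : X × X, ‖⟪v, F.toFun p.1⟫‖ ≤ ‖v‖ * B := fun p =>
      le_trans (abs_real_inner_le_norm _ _)
        (mul_le_mul_of_nonneg_left (hB _) (norm_nonneg _))
    have := key _ hsm _ hbd
    rw [this]
    refine integral_congr_ae (Filter.Eventually.of_forall fun ω => ?_)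
    dsimp only
    haveI := hQ₁ ω; haveI := hQ₂ ω
    have hc : ∀ x : X, ∫ y, ⟪v, F.toFun x⟫ ∂(Q₂ ω) = ⟪v, F.toFun x⟫ := by
      intro x; rw [integral_const]; simp
    simp_rw [hc]
    rw [integral_inner (bounded_integrable F.stronglyMeasurable.aestronglyMeasurable hB) v]
    rfl
  have mean₂ : ∫ ω, F.toFun (Z ω) ∂Pr = ∫ ω, meanEmb F (Q₂ ω) ∂Pr := by
    refine ext_inner_left ℝ fun v => ?_
    rw [← integral_inner hFZ v, ← integral_inner hM₂ v]
    have hsm : StronglyMeasurable (fun p : X × X => ⟪v, F.toFun p.2⟫) :=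
      stronglyMeasurable_const.inner (F.stronglyMeasurable.comp_measurable measurable_snd)
    have hbd : ∀ p : X × X, ‖⟪v, F.toFun p.2⟫‖ ≤ ‖v‖ * B := fun p =>
      le_trans (abs_real_inner_le_norm _ _)
        (mul_le_mul_of_nonneg_left (hB _) (norm_nonneg _))
    have := key _ hsm _ hbd
    rw [this]
    refine integral_congr_ae (Filter.Eventually.of_forall fun ω => ?_)
    dsimp only
    haveI := hQ₁ ω; haveI := hQ₂ ω
    have hc : ∫ y, ⟪v, F.toFun y⟫ ∂(Q₂ ω) = ⟪v, meanEmb F (Q₂ ω)⟫ := by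
      rw [integral_inner (bounded_integrable F.stronglyMeasurable.aestronglyMeasurable hB) v]
      rfl
    have h2 : ∫ x, ∫ y, ⟪v, F.toFun y⟫ ∂(Q₂ ω) ∂(Q₁ ω)
        = ∫ _x, ⟪v, meanEmb F (Q₂ ω)⟫ ∂(Q₁ ω) :=
      integral_congr_ae (Filter.Eventually.of_forall fun x => hc)
    rw [h2, integral_const]; simp
  have inner_eq : ∫ ω, ⟪F.toFun (Y ω), F.toFun (Z ω)⟫ ∂Pr
      = ∫ ω, ⟪meanEmb F (Q₁ ω), meanEmb F (Q₂ ω)⟫ ∂Pr := by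
    have hsm : StronglyMeasurable (Function.uncurry k) := hk.measurable.stronglyMeasurable
    have hbd : ∀ p : X × X, ‖Function.uncurry k p‖ ≤ max hk.bounded.choose 0 := fun p =>
      le_trans (hk.bounded.choose_spec p.1 p.2) (le_max_left _ _)
    have h1 : ∀ ω, ⟪F.toFun (Y ω), F.toFun (Z ω)⟫ = Function.uncurry k (Y ω, Z ω) := by
      intro ω; exact F.repro _ _
    simp_rw [h1]
    rw [key _ hsm _ hbd]
    refine integral_congr_ae (Filter.Eventually.of_forall fun ω => ?_)
    dsimp only
    haveI := hQ₁ ω; haveI := hQ₂ ω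
    rw [inner_meanEmb F hB]
    rfl
  -- conclude
  rw [kerCov, hilbCov, cov_expand Pr hM₁ hM₂ hM₁₂, cov_expand Pr hFY hFZ hFYZ,
    inner_eq, mean₁, mean₂]

end Helpers

theorem stmt_7
    {X : Type*} [TopologicalSpace X] [PolishSpace X] [LocallyCompactSpace X]
    [MeasurableSpace X] [BorelSpace X]
    {k : X → X → ℝ} (hk : IsKernel k)
    {H : Type*} [NormedAddCommGroup H] [InnerProductSpace ℝ H] [CompleteSpace H]
    (F : FeatureMap k H)
    {Ω : Type*} [MeasurableSpace Ω] (Pr : Measure Ω) [IsProbabilityMeasure Pr]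
    (P₁ P₂ : Ω → Measure X)
    (hP₁ : ∀ ω, IsProbabilityMeasure (P₁ ω)) (hP₂ : ∀ ω, IsProbabilityMeasure (P₂ ω))
    (hP₁m : Measurable P₁) (hP₂m : Measurable P₂)
    -- the four observables
    (X11 X12 X21 X22 : Ω → X)
    (hX11 : Measurable X11) (hX12 : Measurable X12)
    (hX21 : Measurable X21) (hX22 : Measurable X22)
    -- `X_{i,1}, X_{i,2}` are i.i.d. from `P̃ᵢ` given `(P̃₁,P̃₂)`, the groups being
    -- conditionally independent given `(P̃₁,P̃₂)`
    (hmodel : ∀ (A B C D : Set X), MeasurableSet A → MeasurableSet B →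
      MeasurableSet C → MeasurableSet D →
      ∀ E : Set Ω, MeasurableSet[mGen P₁ P₂] E →
      Pr (X11 ⁻¹' A ∩ X12 ⁻¹' B ∩ X21 ⁻¹' C ∩ X22 ⁻¹' D ∩ E)
        = ∫⁻ ω in E, P₁ ω A * P₁ ω B * P₂ ω C * P₂ ω D ∂Pr) :
    kerCov F Pr P₁ P₂ = hilbCov Pr (fun ω => F.toFun (X11 ω)) (fun ω => F.toFun (X21 ω)) ∧
    kerVar F Pr P₁ = hilbCov Pr (fun ω => F.toFun (X11 ω)) (fun ω => F.toFun (X12 ω)) ∧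
    kerVar F Pr P₂ = hilbCov Pr (fun ω => F.toFun (X21 ω)) (fun ω => F.toFun (X22 ω)) ∧
    (0 < kerVar F Pr P₁ → 0 < kerVar F Pr P₂ →
      kerCorr F Pr P₁ P₂ =
        hilbCov Pr (fun ω => F.toFun (X11 ω)) (fun ω => F.toFun (X21 ω)) /
          (Real.sqrt (hilbCov Pr (fun ω => F.toFun (X11 ω)) (fun ω => F.toFun (X12 ω)))
            * Real.sqrt (hilbCov Pr (fun ω => F.toFun (X21 ω)) (fun ω => F.toFun (X22 ω))))) := by
  classical
  have hlaw12 : ∀ A B : Set X, MeasurableSet A → MeasurableSet B →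
      Pr (X11 ⁻¹' A ∩ X21 ⁻¹' B) = ∫⁻ ω, P₁ ω A * P₂ ω B ∂Pr := by
    intro A B hA hB
    have := hmodel A Set.univ B Set.univ hA MeasurableSet.univ hB MeasurableSet.univ
      Set.univ MeasurableSet.univ
    simp only [Set.preimage_univ, Set.inter_univ, Measure.restrict_univ] at this
    rw [this]
    refine lintegral_congr fun ω => ?_
    haveI := hP₁ ω; haveI := hP₂ ω
    simp [measure_univ]
  have hlaw11 : ∀ A B : Set X, MeasurableSet A → MeasurableSet B →
      Pr (X11 ⁻¹' A ∩ X12 ⁻¹' B) = ∫⁻ ω, P₁ ω A * P₁ ω B ∂Pr := by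
    intro A B hA hB
    have := hmodel A B Set.univ Set.univ hA hB MeasurableSet.univ MeasurableSet.univ
      Set.univ MeasurableSet.univ
    simp only [Set.preimage_univ, Set.inter_univ, Measure.restrict_univ] at this
    rw [this]
    refine lintegral_congr fun ω => ?_
    haveI := hP₁ ω; haveI := hP₂ ω
    simp [measure_univ]
  have hlaw22 : ∀ A B : Set X, MeasurableSet A → MeasurableSet B →
      Pr (X21 ⁻¹' A ∩ X22 ⁻¹' B) = ∫⁻ ω, P₂ ω A * P₂ ω B ∂Pr := by
    intro A B hA hB
    have := hmodel Set.univ Set.univ A B MeasurableSet.univ MeasurableSet.univ hA hB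
      Set.univ MeasurableSet.univ
    simp only [Set.preimage_univ, Set.univ_inter, Set.inter_univ, Measure.restrict_univ] at this
    rw [this]
    refine lintegral_congr fun ω => ?_
    haveI := hP₁ ω; haveI := hP₂ ω
    simp [measure_univ, mul_comm, mul_assoc, mul_left_comm]
  have h12 := kerCov_eq_hilbCov hk F Pr P₁ P₂ hP₁ hP₂ hP₁m hP₂m hX11 hX21 hlaw12
  have h11 := kerCov_eq_hilbCov hk F Pr P₁ P₁ hP₁ hP₁ hP₁m hP₁m hX11 hX12 hlaw11
  have h22 := kerCov_eq_hilbCov hk F Pr P₂ P₂ hP₂ hP₂ hP₂m hP₂m hX21 hX22 hlaw22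
  refine ⟨h12, h11, h22, fun _ _ => ?_⟩
  rw [kerCorr, kerVar, kerVar, h12, h11, h22]


end
end

section
/- Let (X_{1,1}^{(t)}, X_{2,1}^{(t)}, X_{1,2}^{(t)}, X_{2,2}^{(t)}), for t = 1,…,M, be independent copies of observations from the partially exchangeable model X_{i,j} | (P̃₁,P̃₂) iid ∼ P̃ᵢ, (P̃₁,P̃₂) ∼ Q. Then the statistic (M−1)^{-1} Σ_{t=1}^M k(X_{1,1}^{(t)}, X_{2,1}^{(t)}) − ((M−1)M)^{-1} Σ_{t=1}^M Σ_{s=1}^M k(X_{1,1}^{(t)}, X_{2,1}^{(s)}) is an unbiased estimator of Cov_k(P̃₁,P̃₂), and for i = 1,2 the statistic (M−1)^{-1} Σ_{t=1}^M k(X_{i,1}^{(t)}, X_{i,2}^{(t)}) − ((M−1)M)^{-1} Σ_{t=1}^M Σ_{s=1}^M k(X_{i,1}^{(t)}, X_{i,2}^{(s)}) is an unbiased estimator of Var_k(P̃ᵢ). -/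
open MeasureTheory ProbabilityTheory Filter
open scoped RealInnerProductSpace ENNReal NNReal

noncomputable section

section Aux

variable {X : Type*} [MeasurableSpace X] {k : X → X → ℝ}
  {H : Type*} [NormedAddCommGroup H] [InnerProductSpace ℝ H] [CompleteSpace H]

/-- bound on feature map norm -/
lemma featureBound (hk : IsKernel k) (F : FeatureMap k H) :
    ∃ C : ℝ, 0 ≤ C ∧ ∀ x, ‖F.toFun x‖ ≤ C := by
  obtain ⟨C, hC⟩ := hk.bounded
  refine ⟨Real.sqrt (max C 0), Real.sqrt_nonneg _, fun x => ?_⟩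
  rw [← Real.sqrt_sq (norm_nonneg (F.toFun x))]
  apply Real.sqrt_le_sqrt
  have h1 : ‖F.toFun x‖ ^ 2 = k x x := by
    rw [← real_inner_self_eq_norm_sq, F.repro]
  rw [h1]
  exact le_max_of_le_left ((le_abs_self _).trans (hC x x))

lemma integrable_feature (F : FeatureMap k H) {C : ℝ} (hC : ∀ x, ‖F.toFun x‖ ≤ C)
    (μ : Measure X) [IsFiniteMeasure μ] : Integrable F.toFun μ :=
  (integrable_const C).mono' F.stronglyMeasurable.aestronglyMeasurable (ae_of_all _ hC)

lemma meanEmb_norm_le (F : FeatureMap k H) {C : ℝ} (hC : ∀ x, ‖F.toFun x‖ ≤ C)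
    (μ : Measure X) [IsProbabilityMeasure μ] : ‖meanEmb F μ‖ ≤ C := by
  calc ‖meanEmb F μ‖ ≤ ∫ x, C ∂μ :=
        norm_integral_le_of_norm_le (integrable_const C) (ae_of_all _ hC)
    _ = C := by simp

lemma integral_k_prod (hk : IsKernel k) (F : FeatureMap k H) {C : ℝ}
    (hC : ∀ x, ‖F.toFun x‖ ≤ C) (μ ν : Measure X)
    [IsProbabilityMeasure μ] [IsProbabilityMeasure ν] :
    ∫ p : X × X, k p.1 p.2 ∂(μ.prod ν) = ⟪meanEmb F μ, meanEmb F ν⟫ := by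
  obtain ⟨C₀, hC₀⟩ := hk.bounded
  have hint : Integrable (fun p : X × X => k p.1 p.2) (μ.prod ν) := by
    refine (integrable_const C₀).mono'
      (hk.measurable.stronglyMeasurable.aestronglyMeasurable) (ae_of_all _ fun p => ?_)
    simpa [Real.norm_eq_abs] using hC₀ p.1 p.2
  rw [MeasureTheory.integral_prod _ hint]
  have h1 : ∀ x : X, ∫ y, k x y ∂ν = ⟪F.toFun x, meanEmb F ν⟫ := by
    intro x
    rw [meanEmb, ← integral_inner (integrable_feature F hC ν)]
    simp_rw [F.repro]
  simp_rw [h1]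
  have h2 : ∀ x : X, (⟪F.toFun x, meanEmb F ν⟫ : ℝ) = ⟪meanEmb F ν, F.toFun x⟫ :=
    fun x => real_inner_comm _ _
  simp_rw [h2]
  rw [integral_inner (integrable_feature F hC μ), real_inner_comm]
  rfl

variable {Ω : Type*} [MeasurableSpace Ω]

lemma bind_eq_map_snd (Pr : Measure Ω) [SFinite Pr] (κ : Kernel Ω X) [IsSFiniteKernel κ] :
    Pr.bind κ = (Pr.compProd κ).map Prod.snd := by
  ext s hs
  rw [Measure.bind_apply hs κ.measurable.aemeasurable,
    Measure.map_apply measurable_snd hs,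
    Measure.compProd_apply (hs.preimage measurable_snd)]
  congr 1

lemma integral_bind' (Pr : Measure Ω) [IsProbabilityMeasure Pr] (κ : Kernel Ω X)
    [IsMarkovKernel κ] {E : Type*} [NormedAddCommGroup E] [NormedSpace ℝ E]
    {f : X → E} (hf : StronglyMeasurable f) {C : ℝ} (hC : ∀ x, ‖f x‖ ≤ C) :
    ∫ x, f x ∂(Pr.bind κ) = ∫ ω, ∫ x, f x ∂(κ ω) ∂Pr := by
  rw [bind_eq_map_snd Pr κ,
    integral_map measurable_snd.aemeasurable hf.aestronglyMeasurable]
  have hint : Integrable (fun p : Ω × X => f p.2) (Pr.compProd κ) := by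
    have : IsProbabilityMeasure (Pr.compProd κ) := by
      constructor; rw [Measure.compProd_apply_univ]; simp
    exact (integrable_const C).mono'
      (hf.comp_measurable measurable_snd).aestronglyMeasurable (ae_of_all _ fun p => hC p.2)
  rw [Measure.integral_compProd hint]

/-- strong measurability of the mean embedding along a kernel -/
lemma stronglyMeasurable_meanEmb (F : FeatureMap k H) (κ : Kernel Ω X) [IsSFiniteKernel κ] :
    StronglyMeasurable (fun ω => meanEmb F (κ ω)) := by
  have : StronglyMeasurable (fun p : Ω × X => F.toFun p.2) :=
    F.stronglyMeasurable.comp_measurable measurable_snd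
  exact this.integral_kernel_prod_right'

end Aux

section Aux2

variable {X : Type*} [MeasurableSpace X] {k : X → X → ℝ}
  {H : Type*} [NormedAddCommGroup H] [InnerProductSpace ℝ H] [CompleteSpace H]
  {Ω : Type*} [MeasurableSpace Ω]

lemma kerCov_eq (hk : IsKernel k) (F : FeatureMap k H)
    (Pr : Measure Ω) [IsProbabilityMeasure Pr]
    (Q₁ Q₂ : Ω → Measure X)
    (hQ₁ : ∀ ω, IsProbabilityMeasure (Q₁ ω)) (hQ₂ : ∀ ω, IsProbabilityMeasure (Q₂ ω))
    (hQ₁m : Measurable Q₁) (hQ₂m : Measurable Q₂) :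
    kerCov F Pr Q₁ Q₂ = (∫ ω, ⟪meanEmb F (Q₁ ω), meanEmb F (Q₂ ω)⟫ ∂Pr)
      - ⟪∫ ω, meanEmb F (Q₁ ω) ∂Pr, ∫ ω, meanEmb F (Q₂ ω) ∂Pr⟫ := by
  obtain ⟨C, hC0, hC⟩ := featureBound hk F
  set κ₁ : Kernel Ω X := ⟨Q₁, hQ₁m⟩ with hκ₁
  set κ₂ : Kernel Ω X := ⟨Q₂, hQ₂m⟩ with hκ₂
  haveI : IsMarkovKernel κ₁ := ⟨hQ₁⟩
  haveI : IsMarkovKernel κ₂ := ⟨hQ₂⟩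
  have hm₁ : StronglyMeasurable (fun ω => meanEmb F (Q₁ ω)) :=
    stronglyMeasurable_meanEmb F κ₁
  have hm₂ : StronglyMeasurable (fun ω => meanEmb F (Q₂ ω)) :=
    stronglyMeasurable_meanEmb F κ₂
  have hb₁ : ∀ ω, ‖meanEmb F (Q₁ ω)‖ ≤ C := fun ω => by
    haveI := hQ₁ ω; exact meanEmb_norm_le F hC (Q₁ ω)
  have hb₂ : ∀ ω, ‖meanEmb F (Q₂ ω)‖ ≤ C := fun ω => by
    haveI := hQ₂ ω; exact meanEmb_norm_le F hC (Q₂ ω)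
  have hi₁ : Integrable (fun ω => meanEmb F (Q₁ ω)) Pr :=
    (integrable_const C).mono' hm₁.aestronglyMeasurable (ae_of_all _ hb₁)
  have hi₂ : Integrable (fun ω => meanEmb F (Q₂ ω)) Pr :=
    (integrable_const C).mono' hm₂.aestronglyMeasurable (ae_of_all _ hb₂)
  set a := ∫ ω, meanEmb F (Q₁ ω) ∂Pr with ha
  set b := ∫ ω, meanEmb F (Q₂ ω) ∂Pr with hb
  have hA : Integrable (fun ω => (⟪meanEmb F (Q₁ ω), meanEmb F (Q₂ ω)⟫ : ℝ)) Pr := by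
    refine (integrable_const (C * C)).mono'
      (hm₁.inner hm₂).aestronglyMeasurable (ae_of_all _ fun ω => ?_)
    calc ‖(⟪meanEmb F (Q₁ ω), meanEmb F (Q₂ ω)⟫ : ℝ)‖
        ≤ ‖meanEmb F (Q₁ ω)‖ * ‖meanEmb F (Q₂ ω)‖ := norm_inner_le_norm _ _
      _ ≤ C * C := mul_le_mul (hb₁ ω) (hb₂ ω) (norm_nonneg _) hC0
  have hB : Integrable (fun ω => (⟪meanEmb F (Q₁ ω), b⟫ : ℝ)) Pr := hi₁.inner_const b
  have hCint : Integrable (fun ω => (⟪a, meanEmb F (Q₂ ω)⟫ : ℝ)) Pr := hi₂.const_inner a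
  have hBval : ∫ ω, (⟪meanEmb F (Q₁ ω), b⟫ : ℝ) ∂Pr = ⟪a, b⟫ := by
    have h2 : ∀ ω, (⟪meanEmb F (Q₁ ω), b⟫ : ℝ) = ⟪b, meanEmb F (Q₁ ω)⟫ :=
      fun ω => real_inner_comm _ _
    simp_rw [h2]
    rw [integral_inner hi₁, real_inner_comm]
  have hCval : ∫ ω, (⟪a, meanEmb F (Q₂ ω)⟫ : ℝ) ∂Pr = ⟪a, b⟫ := integral_inner hi₂ a
  have e : ∀ ω, (⟪meanEmb F (Q₁ ω) - a, meanEmb F (Q₂ ω) - b⟫ : ℝ)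
      = ⟪meanEmb F (Q₁ ω), meanEmb F (Q₂ ω)⟫ - ⟪meanEmb F (Q₁ ω), b⟫
        - ⟪a, meanEmb F (Q₂ ω)⟫ + ⟪a, b⟫ := by
    intro ω
    rw [inner_sub_left, inner_sub_right, inner_sub_right]
    ring
  rw [kerCov, ← ha, ← hb]
  simp_rw [e]
  have h₂ : Integrable (fun ω => (⟪meanEmb F (Q₁ ω), meanEmb F (Q₂ ω)⟫ : ℝ)
      - ⟪meanEmb F (Q₁ ω), b⟫) Pr := hA.sub hB
  have h₁ : Integrable (fun ω => (⟪meanEmb F (Q₁ ω), meanEmb F (Q₂ ω)⟫ : ℝ)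
      - ⟪meanEmb F (Q₁ ω), b⟫ - ⟪a, meanEmb F (Q₂ ω)⟫) Pr := h₂.sub hCint
  rw [integral_add h₁ (integrable_const _),
    integral_sub h₂ hCint, integral_sub hA hB, hBval, hCval, integral_const]
  simp

lemma integral_stat (hk : IsKernel k) (F : FeatureMap k H)
    (Pr : Measure Ω) [IsProbabilityMeasure Pr]
    (Q₁ Q₂ : Ω → Measure X)
    (hQ₁ : ∀ ω, IsProbabilityMeasure (Q₁ ω)) (hQ₂ : ∀ ω, IsProbabilityMeasure (Q₂ ω))
    (hQ₁m : Measurable Q₁) (hQ₂m : Measurable Q₂)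
    (M : ℕ) (hM : 2 ≤ M) (Y Z : Fin M → Ω → X)
    (hY : ∀ t, Measurable (Y t)) (hZ : ∀ t, Measurable (Z t))
    (hpair : ∀ t, Measure.map (fun ω => (Y t ω, Z t ω)) Pr
      = Pr.bind (fun ω => (Q₁ ω).prod (Q₂ ω)))
    (hind : ∀ t s, t ≠ s → IndepFun (Y t) (Z s) Pr) :
    ∫ ω, (((M : ℝ) - 1)⁻¹ * ∑ t : Fin M, k (Y t ω) (Z t ω)
        - (((M : ℝ) - 1) * M)⁻¹ * ∑ t : Fin M, ∑ s : Fin M, k (Y t ω) (Z s ω)) ∂Pr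
      = kerCov F Pr Q₁ Q₂ := by
  obtain ⟨C, hC0, hC⟩ := featureBound hk F
  obtain ⟨C₀, hC₀⟩ := hk.bounded
  set κ₁ : Kernel Ω X := ⟨Q₁, hQ₁m⟩ with hκ₁
  set κ₂ : Kernel Ω X := ⟨Q₂, hQ₂m⟩ with hκ₂
  haveI : IsMarkovKernel κ₁ := ⟨hQ₁⟩
  haveI : IsMarkovKernel κ₂ := ⟨hQ₂⟩
  set κp : Kernel Ω (X × X) := κ₁ ×ₖ κ₂ with hκp
  have hκpa : ∀ ω, κp ω = (Q₁ ω).prod (Q₂ ω) := fun ω => Kernel.prod_apply κ₁ κ₂ ω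
  have hbindp : Pr.bind (fun ω => (Q₁ ω).prod (Q₂ ω)) = Pr.bind ⇑κp :=
    congrArg _ (funext fun ω => (hκpa ω).symm)
  have hksm : StronglyMeasurable (fun p : X × X => k p.1 p.2) :=
    hk.measurable.stronglyMeasurable
  have hkbd : ∀ p : X × X, ‖k p.1 p.2‖ ≤ C₀ := fun p => by
    simpa [Real.norm_eq_abs] using hC₀ p.1 p.2
  -- diagonal terms
  have hdiag : ∀ t, ∫ ω, k (Y t ω) (Z t ω) ∂Pr
      = ∫ ω, (⟪meanEmb F (Q₁ ω), meanEmb F (Q₂ ω)⟫ : ℝ) ∂Pr := by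
    intro t
    have hmp : Measurable (fun ω => (Y t ω, Z t ω)) := (hY t).prodMk (hZ t)
    calc ∫ ω, k (Y t ω) (Z t ω) ∂Pr
        = ∫ p : X × X, k p.1 p.2 ∂(Measure.map (fun ω => (Y t ω, Z t ω)) Pr) :=
          (integral_map hmp.aemeasurable hksm.aestronglyMeasurable).symm
      _ = ∫ p : X × X, k p.1 p.2 ∂(Pr.bind ⇑κp) := by rw [hpair t, hbindp]
      _ = ∫ ω, ∫ p : X × X, k p.1 p.2 ∂(κp ω) ∂Pr := integral_bind' Pr κp hksm hkbd
      _ = ∫ ω, (⟪meanEmb F (Q₁ ω), meanEmb F (Q₂ ω)⟫ : ℝ) ∂Pr := by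
          refine integral_congr_ae (ae_of_all _ fun ω => ?_)
          haveI := hQ₁ ω; haveI := hQ₂ ω
          show ∫ p : X × X, k p.1 p.2 ∂(κp ω) = _
          rw [hκpa ω]
          exact integral_k_prod hk F hC (Q₁ ω) (Q₂ ω)
  -- marginals
  have hmarg₁ : ∀ t, Measure.map (Y t) Pr = Pr.bind ⇑κ₁ := by
    intro t
    have hmp : Measurable (fun ω => (Y t ω, Z t ω)) := (hY t).prodMk (hZ t)
    have h1 : Measure.map (Y t) Pr
        = (Measure.map (fun ω => (Y t ω, Z t ω)) Pr).map Prod.fst := by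
      rw [Measure.map_map measurable_fst hmp]; rfl
    rw [h1, hpair t, hbindp]
    ext s hs
    rw [Measure.map_apply measurable_fst hs,
      Measure.bind_apply (hs.preimage measurable_fst) κp.measurable.aemeasurable,
      Measure.bind_apply hs κ₁.measurable.aemeasurable]
    refine lintegral_congr fun ω => ?_
    haveI := hQ₁ ω; haveI := hQ₂ ω
    rw [hκpa ω, ← Set.prod_univ, Measure.prod_prod, measure_univ, mul_one]
    rfl
  have hmarg₂ : ∀ t, Measure.map (Z t) Pr = Pr.bind ⇑κ₂ := by
    intro t
    have hmp : Measurable (fun ω => (Y t ω, Z t ω)) := (hY t).prodMk (hZ t)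
    have h1 : Measure.map (Z t) Pr
        = (Measure.map (fun ω => (Y t ω, Z t ω)) Pr).map Prod.snd := by
      rw [Measure.map_map measurable_snd hmp]; rfl
    rw [h1, hpair t, hbindp]
    ext s hs
    rw [Measure.map_apply measurable_snd hs,
      Measure.bind_apply (hs.preimage measurable_snd) κp.measurable.aemeasurable,
      Measure.bind_apply hs κ₂.measurable.aemeasurable]
    refine lintegral_congr fun ω => ?_
    haveI := hQ₁ ω; haveI := hQ₂ ω
    rw [hκpa ω, ← Set.univ_prod, Measure.prod_prod, measure_univ, one_mul]
    rfl
  have hEmb₁ : ∀ t, meanEmb F (Measure.map (Y t) Pr) = ∫ ω, meanEmb F (Q₁ ω) ∂Pr := by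
    intro t
    rw [meanEmb, hmarg₁ t, integral_bind' Pr κ₁ F.stronglyMeasurable hC]
    rfl
  have hEmb₂ : ∀ t, meanEmb F (Measure.map (Z t) Pr) = ∫ ω, meanEmb F (Q₂ ω) ∂Pr := by
    intro t
    rw [meanEmb, hmarg₂ t, integral_bind' Pr κ₂ F.stronglyMeasurable hC]
    rfl
  -- off-diagonal terms
  have hoff : ∀ t s, t ≠ s → ∫ ω, k (Y t ω) (Z s ω) ∂Pr
      = ⟪∫ ω, meanEmb F (Q₁ ω) ∂Pr, ∫ ω, meanEmb F (Q₂ ω) ∂Pr⟫ := by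
    intro t s hts
    have hmp : Measurable (fun ω => (Y t ω, Z s ω)) := (hY t).prodMk (hZ s)
    have hmap := (indepFun_iff_map_prod_eq_prod_map_map (hY t).aemeasurable
      (hZ s).aemeasurable).mp (hind t s hts)
    haveI : IsProbabilityMeasure (Measure.map (Y t) Pr) :=
      Measure.isProbabilityMeasure_map (hY t).aemeasurable
    haveI : IsProbabilityMeasure (Measure.map (Z s) Pr) :=
      Measure.isProbabilityMeasure_map (hZ s).aemeasurable
    calc ∫ ω, k (Y t ω) (Z s ω) ∂Pr
        = ∫ p : X × X, k p.1 p.2 ∂(Measure.map (fun ω => (Y t ω, Z s ω)) Pr) :=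
          (integral_map hmp.aemeasurable hksm.aestronglyMeasurable).symm
      _ = ∫ p : X × X, k p.1 p.2 ∂((Measure.map (Y t) Pr).prod (Measure.map (Z s) Pr)) := by
          rw [hmap]
      _ = ⟪meanEmb F (Measure.map (Y t) Pr), meanEmb F (Measure.map (Z s) Pr)⟫ :=
          integral_k_prod hk F hC _ _
      _ = ⟪∫ ω, meanEmb F (Q₁ ω) ∂Pr, ∫ ω, meanEmb F (Q₂ ω) ∂Pr⟫ := by
          rw [hEmb₁ t, hEmb₂ s]
  -- integrability of the k-terms
  have hkint : ∀ t s, Integrable (fun ω => k (Y t ω) (Z s ω)) Pr := by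
    intro t s
    have hmeas : Measurable (fun ω => k (Y t ω) (Z s ω)) :=
      hk.measurable.comp ((hY t).prodMk (hZ s))
    exact (integrable_const C₀).mono' hmeas.stronglyMeasurable.aestronglyMeasurable
      (ae_of_all _ fun ω => by simpa [Real.norm_eq_abs] using hC₀ (Y t ω) (Z s ω))
  set A : ℝ := ∫ ω, (⟪meanEmb F (Q₁ ω), meanEmb F (Q₂ ω)⟫ : ℝ) ∂Pr with hA
  set B : ℝ := (⟪∫ ω, meanEmb F (Q₁ ω) ∂Pr, ∫ ω, meanEmb F (Q₂ ω) ∂Pr⟫ : ℝ) with hB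
  have hS₁ : Integrable (fun ω => ∑ t : Fin M, k (Y t ω) (Z t ω)) Pr :=
    integrable_finset_sum _ fun t _ => hkint t t
  have hS₂ : Integrable (fun ω => ∑ t : Fin M, ∑ s : Fin M, k (Y t ω) (Z s ω)) Pr :=
    integrable_finset_sum _ fun t _ => integrable_finset_sum _ fun s _ => hkint t s
  have hT₁ : Integrable (fun ω => ((M : ℝ) - 1)⁻¹ * ∑ t : Fin M, k (Y t ω) (Z t ω)) Pr :=
    hS₁.const_mul _
  have hT₂ : Integrable (fun ω =>
      (((M : ℝ) - 1) * M)⁻¹ * ∑ t : Fin M, ∑ s : Fin M, k (Y t ω) (Z s ω)) Pr :=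
    hS₂.const_mul _
  rw [integral_sub hT₁ hT₂, integral_const_mul, integral_const_mul,
    integral_finset_sum _ (fun t _ => hkint t t),
    integral_finset_sum _ (fun t _ => integrable_finset_sum _ fun s _ => hkint t s)]
  simp_rw [fun t => integral_finset_sum Finset.univ (fun s _ => hkint t s)]
  have hsum₁ : ∑ t : Fin M, ∫ ω, k (Y t ω) (Z t ω) ∂Pr = (M : ℝ) * A := by
    rw [Finset.sum_congr rfl fun t _ => hdiag t]
    simp [mul_comm]
  have hsum₂ : ∑ t : Fin M, ∑ s : Fin M, ∫ ω, k (Y t ω) (Z s ω) ∂Pr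
      = (M : ℝ) * A + (M : ℝ) * (((M : ℝ) - 1) * B) := by
    have hrow : ∀ t : Fin M, ∑ s : Fin M, ∫ ω, k (Y t ω) (Z s ω) ∂Pr
        = A + ((M : ℝ) - 1) * B := by
      intro t
      rw [← Finset.add_sum_erase Finset.univ _ (Finset.mem_univ t), hdiag t]
      congr 1
      rw [Finset.sum_congr rfl fun s hs => hoff t s (Ne.symm (Finset.ne_of_mem_erase hs))]
      rw [Finset.sum_const, Finset.card_erase_of_mem (Finset.mem_univ t), Finset.card_univ,
        Fintype.card_fin, nsmul_eq_mul, Nat.cast_sub (by omega : 1 ≤ M), Nat.cast_one]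
    rw [Finset.sum_congr rfl fun t _ => hrow t, Finset.sum_const, Finset.card_univ,
      Fintype.card_fin, nsmul_eq_mul]
    ring
  rw [hsum₁, hsum₂, kerCov_eq hk F Pr Q₁ Q₂ hQ₁ hQ₂ hQ₁m hQ₂m, ← hA, ← hB]
  have hM1 : (M : ℝ) - 1 ≠ 0 := by
    have : (2 : ℝ) ≤ (M : ℝ) := by exact_mod_cast hM
    linarith
  have hM0 : (M : ℝ) ≠ 0 := by
    have : (2 : ℝ) ≤ (M : ℝ) := by exact_mod_cast hM
    linarith
  field_simp
  ring

end Aux2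

section Aux3

variable {X : Type*} [MeasurableSpace X] {Ω : Type*} [MeasurableSpace Ω]

lemma map_pair_eq_bind (Pr : Measure Ω) [IsProbabilityMeasure Pr]
    (Q₁ Q₂ : Ω → Measure X)
    (hQ₁ : ∀ ω, IsProbabilityMeasure (Q₁ ω)) (hQ₂ : ∀ ω, IsProbabilityMeasure (Q₂ ω))
    (hQ₁m : Measurable Q₁) (hQ₂m : Measurable Q₂)
    (Y Z : Ω → X) (hYm : Measurable Y) (hZm : Measurable Z)
    (h : ∀ A C : Set X, MeasurableSet A → MeasurableSet C →
      Pr (Y ⁻¹' A ∩ Z ⁻¹' C) = ∫⁻ ω, Q₁ ω A * Q₂ ω C ∂Pr) :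
    Measure.map (fun ω => (Y ω, Z ω)) Pr = Pr.bind (fun ω => (Q₁ ω).prod (Q₂ ω)) := by
  set κ₁ : Kernel Ω X := ⟨Q₁, hQ₁m⟩ with hκ₁
  set κ₂ : Kernel Ω X := ⟨Q₂, hQ₂m⟩ with hκ₂
  haveI : IsMarkovKernel κ₁ := ⟨hQ₁⟩
  haveI : IsMarkovKernel κ₂ := ⟨hQ₂⟩
  set κp : Kernel Ω (X × X) := κ₁ ×ₖ κ₂ with hκp
  have hκpa : ∀ ω, κp ω = (Q₁ ω).prod (Q₂ ω) := fun ω => Kernel.prod_apply κ₁ κ₂ ω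
  have hbindp : Pr.bind (fun ω => (Q₁ ω).prod (Q₂ ω)) = Pr.bind ⇑κp :=
    congrArg _ (funext fun ω => (hκpa ω).symm)
  haveI : IsProbabilityMeasure (Measure.map (fun ω => (Y ω, Z ω)) Pr) :=
    Measure.isProbabilityMeasure_map (hYm.prodMk hZm).aemeasurable
  rw [hbindp]
  refine ext_of_generate_finite _ generateFrom_prod.symm isPiSystem_prod ?_ ?_
  · rintro s ⟨A, hA, C, hC, rfl⟩
    simp only [Set.mem_setOf_eq] at hA hC
    rw [Measure.map_apply (hYm.prodMk hZm) (hA.prod hC), Set.mk_preimage_prod,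
      h A C hA hC, Measure.bind_apply (hA.prod hC) κp.measurable.aemeasurable]
    refine lintegral_congr fun ω => ?_
    rw [hκpa ω, Measure.prod_prod]
  · rw [measure_univ, Measure.bind_apply MeasurableSet.univ κp.measurable.aemeasurable]
    have : ∀ ω, κp ω Set.univ = 1 := fun ω => by
      haveI := hQ₁ ω; haveI := hQ₂ ω
      rw [hκpa ω]; exact measure_univ
    simp [this]

end Aux3


theorem stmt_8
    {X : Type*} [TopologicalSpace X] [PolishSpace X] [LocallyCompactSpace X]
    [MeasurableSpace X] [BorelSpace X]
    {k : X → X → ℝ} (hk : IsKernel k)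
    {H : Type*} [NormedAddCommGroup H] [InnerProductSpace ℝ H] [CompleteSpace H]
    (F : FeatureMap k H)
    {Ω : Type*} [MeasurableSpace Ω] (Pr : Measure Ω) [IsProbabilityMeasure Pr]
    (P₁ P₂ : Ω → Measure X)
    (hP₁ : ∀ ω, IsProbabilityMeasure (P₁ ω)) (hP₂ : ∀ ω, IsProbabilityMeasure (P₂ ω))
    (hP₁m : Measurable P₁) (hP₂m : Measurable P₂)
    -- `M` independent copies of the four observables of the partially exchangeable model
    (M : ℕ) (hM : 2 ≤ M)
    (X11 X12 X21 X22 : Fin M → Ω → X)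
    (hX11 : ∀ t, Measurable (X11 t)) (hX12 : ∀ t, Measurable (X12 t))
    (hX21 : ∀ t, Measurable (X21 t)) (hX22 : ∀ t, Measurable (X22 t))
    -- each copy is distributed as the partially exchangeable model:
    -- the law of `(X11 t, X12 t, X21 t, X22 t)` is the `Q`-mixture of
    -- `P̃₁ ⊗ P̃₁ ⊗ P̃₂ ⊗ P̃₂`
    (hlaw : ∀ t : Fin M, ∀ (A B C D : Set X), MeasurableSet A → MeasurableSet B →
      MeasurableSet C → MeasurableSet D →
      Pr (X11 t ⁻¹' A ∩ X12 t ⁻¹' B ∩ X21 t ⁻¹' C ∩ X22 t ⁻¹' D)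
        = ∫⁻ ω, P₁ ω A * P₁ ω B * P₂ ω C * P₂ ω D ∂Pr)
    -- the copies are independent
    (hindep : iIndepFun
      (fun t ω => (X11 t ω, X12 t ω, X21 t ω, X22 t ω)) Pr) :
    (∫ ω, (((M : ℝ) - 1)⁻¹ * ∑ t : Fin M, k (X11 t ω) (X21 t ω)
        - (((M : ℝ) - 1) * M)⁻¹ * ∑ t : Fin M, ∑ s : Fin M, k (X11 t ω) (X21 s ω)) ∂Pr)
      = kerCov F Pr P₁ P₂ ∧
    (∫ ω, (((M : ℝ) - 1)⁻¹ * ∑ t : Fin M, k (X11 t ω) (X12 t ω)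
        - (((M : ℝ) - 1) * M)⁻¹ * ∑ t : Fin M, ∑ s : Fin M, k (X11 t ω) (X12 s ω)) ∂Pr)
      = kerVar F Pr P₁ ∧
    (∫ ω, (((M : ℝ) - 1)⁻¹ * ∑ t : Fin M, k (X21 t ω) (X22 t ω)
        - (((M : ℝ) - 1) * M)⁻¹ * ∑ t : Fin M, ∑ s : Fin M, k (X21 t ω) (X22 s ω)) ∂Pr)
      = kerVar F Pr P₂ := by
  refine ⟨?_, ?_, ?_⟩
  · refine integral_stat hk F Pr P₁ P₂ hP₁ hP₂ hP₁m hP₂m M hM X11 X21 hX11 hX21 ?_ ?_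
    · intro t
      refine map_pair_eq_bind Pr P₁ P₂ hP₁ hP₂ hP₁m hP₂m _ _ (hX11 t) (hX21 t) ?_
      intro A C hA hC
      have h := hlaw t A Set.univ C Set.univ hA MeasurableSet.univ hC MeasurableSet.univ
      simp only [Set.preimage_univ, Set.inter_univ] at h
      rw [h]
      refine lintegral_congr fun ω => ?_
      haveI := hP₁ ω; haveI := hP₂ ω
      simp
    · intro t s hts
      exact (hindep.indepFun hts).comp measurable_fst
        (measurable_fst.comp (measurable_snd.comp measurable_snd))
  · rw [kerVar]
    refine integral_stat hk F Pr P₁ P₁ hP₁ hP₁ hP₁m hP₁m M hM X11 X12 hX11 hX12 ?_ ?_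
    · intro t
      refine map_pair_eq_bind Pr P₁ P₁ hP₁ hP₁ hP₁m hP₁m _ _ (hX11 t) (hX12 t) ?_
      intro A B hA hB
      have h := hlaw t A B Set.univ Set.univ hA hB MeasurableSet.univ MeasurableSet.univ
      simp only [Set.preimage_univ, Set.inter_univ] at h
      rw [h]
      refine lintegral_congr fun ω => ?_
      haveI := hP₁ ω; haveI := hP₂ ω
      simp
    · intro t s hts
      exact (hindep.indepFun hts).comp measurable_fst
        (measurable_fst.comp measurable_snd)
  · rw [kerVar]
    refine integral_stat hk F Pr P₂ P₂ hP₂ hP₂ hP₂m hP₂m M hM X21 X22 hX21 hX22 ?_ ?_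
    · intro t
      refine map_pair_eq_bind Pr P₂ P₂ hP₂ hP₂ hP₂m hP₂m _ _ (hX21 t) (hX22 t) ?_
      intro C D hC hD
      have h := hlaw t Set.univ Set.univ C D MeasurableSet.univ MeasurableSet.univ hC hD
      simp only [Set.preimage_univ, Set.univ_inter] at h
      rw [h]
      refine lintegral_congr fun ω => ?_
      haveI := hP₁ ω; haveI := hP₂ ω
      simp
    · intro t s hts
      exact (hindep.indepFun hts).comp
        (measurable_fst.comp (measurable_snd.comp measurable_snd))
        (measurable_snd.comp (measurable_snd.comp measurable_snd))

end
end

section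
/- For any measurable set A ⊆ X, the function k_A(x,y) := 1_A(x)·1_A(y) is a bounded, measurable, symmetric, positive-definite kernel, and for any random probability measures P̃₁, P̃₂ such that P̃₁(A) and P̃₂(A) are not deterministic, the kernel correlation with respect to k_A equals the set-wise Pearson correlation: Corr_{k_A}(P̃₁,P̃₂) = Corr(P̃₁(A), P̃₂(A)). -/
open MeasureTheory ProbabilityTheory Filter
open scoped RealInnerProductSpace ENNReal NNReal

noncomputable section

/-- The set-wise kernel `k_A(x,y) = 1_A(x) 1_A(y)`. -/
def setKernel {X : Type*} (A : Set X) : X → X → ℝ := fun x y =>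
  A.indicator (fun _ => (1 : ℝ)) x * A.indicator (fun _ => (1 : ℝ)) y

theorem stmt_10
    {X : Type*} [TopologicalSpace X] [PolishSpace X] [LocallyCompactSpace X]
    [MeasurableSpace X] [BorelSpace X]
    (A : Set X) (hA : MeasurableSet A)
    {H : Type*} [NormedAddCommGroup H] [InnerProductSpace ℝ H] [CompleteSpace H]
    (F : FeatureMap (setKernel A) H)
    {Ω : Type*} [MeasurableSpace Ω] (Pr : Measure Ω) [IsProbabilityMeasure Pr]
    (P₁ P₂ : Ω → Measure X)
    (hP₁ : ∀ ω, IsProbabilityMeasure (P₁ ω)) (hP₂ : ∀ ω, IsProbabilityMeasure (P₂ ω))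
    (hP₁m : Measurable P₁) (hP₂m : Measurable P₂)
    -- `P̃₁(A)` and `P̃₂(A)` are not deterministic
    (hnd₁ : ¬ ∃ c : ℝ, ∀ᵐ ω ∂Pr, (P₁ ω A).toReal = c)
    (hnd₂ : ¬ ∃ c : ℝ, ∀ᵐ ω ∂Pr, (P₂ ω A).toReal = c) :
    IsKernel (setKernel A) ∧
      kerCorr F Pr P₁ P₂
        = rCorr Pr (fun ω => (P₁ ω A).toReal) (fun ω => (P₂ ω A).toReal) := by
  classical
  constructor
  · refine ⟨?_, ⟨1, ?_⟩, ?_, ?_⟩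
    · exact ((measurable_const.indicator hA).comp measurable_fst).mul
        ((measurable_const.indicator hA).comp measurable_snd)
    · intro x y
      unfold setKernel
      by_cases hx : x ∈ A <;> by_cases hy : y ∈ A <;>
        simp [Set.indicator_of_mem, Set.indicator_of_notMem, hx, hy]
    · intro x y; unfold setKernel; ring
    · intro n x c
      have : ∑ i : Fin n, ∑ j : Fin n, c i * c j * setKernel A (x i) (x j)
          = (∑ i : Fin n, c i * A.indicator (fun _ => (1:ℝ)) (x i)) *
            (∑ j : Fin n, c j * A.indicator (fun _ => (1:ℝ)) (x j)) := by
        rw [Finset.sum_mul_sum]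
        refine Finset.sum_congr rfl fun i _ => Finset.sum_congr rfl fun j _ => ?_
        unfold setKernel; ring
      rw [this]
      exact mul_self_nonneg _
  · -- A is nonempty
    have hAne : A.Nonempty := by
      rcases Set.eq_empty_or_nonempty A with h | h
      · exact absurd ⟨0, Filter.Eventually.of_forall fun ω => by simp [h]⟩ hnd₁
      · exact h
    obtain ⟨x₀, hx₀⟩ := hAne
    set e : H := F.toFun x₀ with he_def
    have he : ⟪e, e⟫ = 1 := by
      simpa [setKernel, Set.indicator_of_mem hx₀] using F.repro x₀ x₀
    have hFx : ∀ x, F.toFun x = (A.indicator (fun _ => (1:ℝ)) x) • e := by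
      intro x
      by_cases hx : x ∈ A
      · have h1 : ⟪F.toFun x, e⟫ = 1 := by
          simpa [setKernel, Set.indicator_of_mem hx, Set.indicator_of_mem hx₀] using
            F.repro x x₀
        have h2 : ⟪F.toFun x, F.toFun x⟫ = 1 := by
          simpa [setKernel, Set.indicator_of_mem hx] using F.repro x x
        have h1' : ⟪e, F.toFun x⟫ = 1 := by rw [real_inner_comm]; exact h1
        have hz : ⟪F.toFun x - e, F.toFun x - e⟫ = 0 := by
          rw [inner_sub_left, inner_sub_right, inner_sub_right, h2, he, h1, h1']
          ring
        have := inner_self_eq_zero.mp hz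
        rw [Set.indicator_of_mem hx, one_smul]
        exact sub_eq_zero.mp this
      · have hz : ⟪F.toFun x, F.toFun x⟫ = 0 := by
          simpa [setKernel, Set.indicator_of_notMem hx] using F.repro x x
        rw [Set.indicator_of_notMem hx, zero_smul]
        exact inner_self_eq_zero.mp hz
    have hmean : ∀ (μ : Measure X), IsProbabilityMeasure μ →
        meanEmb F μ = (μ A).toReal • e := by
      intro μ hμ
      unfold meanEmb
      simp_rw [hFx]
      rw [integral_smul_const]
      congr 1
      rw [integral_indicator_const (1:ℝ) hA, smul_eq_mul, mul_one, measureReal_def]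
    -- measurability and integrability of the set evaluations
    have hmeas : ∀ (P : Ω → Measure X), Measurable P →
        Measurable fun ω => (P ω A).toReal := fun P hP =>
      ((Measure.measurable_coe hA).comp hP).ennreal_toReal
    have hint : ∀ (P : Ω → Measure X), Measurable P → (∀ ω, IsProbabilityMeasure (P ω)) →
        Integrable (fun ω => (P ω A).toReal) Pr := by
      intro P hP hPp
      refine (integrable_const (1:ℝ)).mono' (hmeas P hP).aestronglyMeasurable
        (Filter.Eventually.of_forall fun ω => ?_)
      rw [Real.norm_eq_abs, abs_of_nonneg ENNReal.toReal_nonneg]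
      haveI := hPp ω
      have : P ω A ≤ 1 := prob_le_one
      calc (P ω A).toReal ≤ (1 : ℝ≥0∞).toReal :=
            ENNReal.toReal_mono ENNReal.one_ne_top this
        _ = 1 := ENNReal.toReal_one
    have hmeanInt : ∀ (P : Ω → Measure X), Measurable P →
        (∀ ω, IsProbabilityMeasure (P ω)) →
        (∫ ω', meanEmb F (P ω') ∂Pr) = (∫ ω', (P ω' A).toReal ∂Pr) • e := by
      intro P hP hPp
      have : (fun ω' => meanEmb F (P ω')) = fun ω' => (P ω' A).toReal • e := by
        funext ω'; exact hmean (P ω') (hPp ω')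
      rw [this, integral_smul_const]
    have hCov : ∀ (Q₁ Q₂ : Ω → Measure X), Measurable Q₁ → Measurable Q₂ →
        (∀ ω, IsProbabilityMeasure (Q₁ ω)) → (∀ ω, IsProbabilityMeasure (Q₂ ω)) →
        kerCov F Pr Q₁ Q₂ = rCov Pr (fun ω => (Q₁ ω A).toReal) (fun ω => (Q₂ ω A).toReal) := by
      intro Q₁ Q₂ hQ₁ hQ₂ hQ₁p hQ₂p
      unfold kerCov rCov
      refine integral_congr_ae (Filter.Eventually.of_forall fun ω => ?_)
      dsimp only
      rw [hmean (Q₁ ω) (hQ₁p ω), hmean (Q₂ ω) (hQ₂p ω),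
        hmeanInt Q₁ hQ₁ hQ₁p, hmeanInt Q₂ hQ₂ hQ₂p, ← sub_smul, ← sub_smul,
        real_inner_smul_left, real_inner_smul_right, he]
      ring
    have h₁ := hCov P₁ P₁ hP₁m hP₁m hP₁ hP₁
    have h₂ := hCov P₂ P₂ hP₂m hP₂m hP₂ hP₂
    have h₁₂ := hCov P₁ P₂ hP₁m hP₂m hP₁ hP₂
    unfold kerCorr rCorr kerVar rVar
    rw [h₁₂, h₁, h₂]

end
end
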